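/- arXiv:1006.2048 — 7 statements merged into one kernel-verified Lean document; each statement's English description precedes it below -/
import Mathlib

section
/- Let w_1,…,w_N > 0 and p ∈ (0,1). If every node t uses attempt probability p_t = w_t·p / (1 + (w_t − 1)·p), then node t's throughput equals S_t(p) = (w_t / ∑_{i=1}^N w_i) · S(p, W), where S(p, W) is the total system throughput; in particular the throughput received by each node is proportional to its weight and ∑_t S_t(p) = S(p, W). -/
open Finset

/-- Throughput of node `t` in the fully connected `p`-persistent CSMA model. -/
noncomputable def nodeThroughput (N : ℕ) (EP σ Ts Tc : ℝ) (p : Fin N → ℝ) (t : Fin N) : ℝ :=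
  (p t / (1 - p t)) * (EP * (∏ i, (1 - p i))) /
    ((∏ i, (1 - p i)) * σ + (∑ i, p i / (1 - p i)) * (∏ i, (1 - p i)) * (Ts - Tc)
      + (1 - ∏ i, (1 - p i)) * Tc)

/-- Weighted attempt probability `p_t = w_t p / (1 + (w_t - 1) p)`. -/
noncomputable def wAttempt (w p : ℝ) : ℝ := w * p / (1 + (w - 1) * p)

/-- `P_I(p) = ∏ (1-p)/(1+(w_i-1) p)` for the weighted `p`-persistent scheme. -/
noncomputable def PIw (N : ℕ) (w : Fin N → ℝ) (p : ℝ) : ℝ :=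
  ∏ i, (1 - p) / (1 + (w i - 1) * p)

/-- `P_T(p) = (p/(1-p)) ∑ w_i` for the weighted `p`-persistent scheme. -/
noncomputable def PTw (N : ℕ) (w : Fin N → ℝ) (p : ℝ) : ℝ :=
  (p / (1 - p)) * ∑ i, w i

/-- System throughput `S(p, W)` of the weighted `p`-persistent scheme. -/
noncomputable def Ssys (N : ℕ) (EP σ Ts Tc : ℝ) (w : Fin N → ℝ) (p : ℝ) : ℝ :=
  EP * PTw N w p * PIw N w p /
    (PIw N w p * σ + PTw N w p * PIw N w p * (Ts - Tc) + (1 - PIw N w p) * Tc)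

/-- If every node `t` uses attempt probability `w_t p / (1 + (w_t - 1) p)`, then node `t`'s
throughput equals `(w_t / ∑ w_i) · S(p, W)`; in particular each node's throughput is
proportional to its weight and the node throughputs sum to the system throughput. -/
theorem weighted_fair_allocation (N : ℕ) (EP σ Ts Tc : ℝ)
    (hEP : 0 < EP) (hσ : 0 < σ) (hTc : σ ≤ Tc) (hTs : Tc ≤ Ts)
    (w : Fin N → ℝ) (hw : ∀ i, 0 < w i)
    (p : ℝ) (hp : p ∈ Set.Ioo (0 : ℝ) 1) :
    (∀ t, nodeThroughput N EP σ Ts Tc (fun i => wAttempt (w i) p) t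
        = (w t / ∑ i, w i) * Ssys N EP σ Ts Tc w p) ∧
    (∑ t, nodeThroughput N EP σ Ts Tc (fun i => wAttempt (w i) p) t
        = Ssys N EP σ Ts Tc w p) := by
  obtain ⟨hp0, hp1⟩ := hp
  have h1p : (0:ℝ) < 1 - p := by linarith
  have hden : ∀ i, (0:ℝ) < 1 + (w i - 1) * p := by
    intro i
    have := hw i
    nlinarith
  have hq : ∀ i, 1 - wAttempt (w i) p = (1 - p) / (1 + (w i - 1) * p) := by
    intro i
    unfold wAttempt
    rw [eq_div_iff (hden i).ne', sub_mul, div_mul_cancel₀ _ (hden i).ne']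
    ring
  have hr : ∀ i, wAttempt (w i) p / (1 - wAttempt (w i) p) = w i * (p / (1 - p)) := by
    intro i
    rw [hq i]
    unfold wAttempt
    rw [div_div_div_eq, mul_comm (1 + (w i - 1) * p) (1 - p),
      mul_div_mul_right _ _ (hden i).ne', mul_div_assoc]
  have hPI : (∏ i, (1 - wAttempt (w i) p)) = PIw N w p := by
    unfold PIw
    exact Finset.prod_congr rfl fun i _ => hq i
  have hPT : (∑ i, w i * (p / (1 - p))) = PTw N w p := by
    unfold PTw
    rw [← Finset.sum_mul]
    ring
  have key : ∀ t, nodeThroughput N EP σ Ts Tc (fun i => wAttempt (w i) p) t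
      = (w t * (p / (1 - p))) * (EP * PIw N w p) /
        (PIw N w p * σ + PTw N w p * PIw N w p * (Ts - Tc) + (1 - PIw N w p) * Tc) := by
    intro t
    unfold nodeThroughput
    simp only [hPI, hr, hPT]
  have part1 : ∀ t, nodeThroughput N EP σ Ts Tc (fun i => wAttempt (w i) p) t
      = (w t / ∑ i, w i) * Ssys N EP σ Ts Tc w p := by
    intro t
    have hS : (0:ℝ) < ∑ i, w i :=
      Finset.sum_pos (fun i _ => hw i) ⟨t, Finset.mem_univ t⟩
    rw [key t]
    unfold Ssys PTw
    have hnum : w t * (p / (1 - p)) * (EP * PIw N w p)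
        = (w t / ∑ i, w i) * (EP * ((p / (1 - p)) * ∑ i, w i) * PIw N w p) := by
      field_simp
    rw [hnum, mul_div_assoc]
  refine ⟨part1, ?_⟩
  rcases Nat.eq_zero_or_pos N with hN | hN
  · subst hN
    simp [Ssys, PTw]
  · have hS : (0:ℝ) < ∑ i, w i :=
      Finset.sum_pos (fun i _ => hw i) (Finset.univ_nonempty_iff.mpr (Fin.pos_iff_nonempty.mp hN))
    calc ∑ t, nodeThroughput N EP σ Ts Tc (fun i => wAttempt (w i) p) t
        = ∑ t, (w t / ∑ i, w i) * Ssys N EP σ Ts Tc w p := by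
          exact Finset.sum_congr rfl fun t _ => part1 t
      _ = ((∑ t, w t) / ∑ i, w i) * Ssys N EP σ Ts Tc w p := by
          rw [← Finset.sum_mul, Finset.sum_div]
      _ = Ssys N EP σ Ts Tc w p := by
          rw [div_self hS.ne', one_mul]
end

section
/- Suppose N ≥ 2 and w_1,…,w_N > 0. Then the system throughput p ↦ S(p, W) is strictly quasi-concave on (0,1): there exists a unique p* ∈ (0,1) such that S(·, W) is strictly increasing on (0, p*) and strictly decreasing on (p*, 1). -/
open Finset

/-- `f(p, W) = T_c^* (1 - ∑ p_i(p) - P_I(p)) + P_I(p)`, with `T_c^* = T_c/σ`. -/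
noncomputable def fW (N : ℕ) (σ Tc : ℝ) (w : Fin N → ℝ) (p : ℝ) : ℝ :=
  (Tc / σ) * (1 - (∑ i, wAttempt (w i) p) - PIw N w p) + PIw N w p

/-! ### Auxiliary definitions and lemmas -/

/-- `Q(p) = ∏ (1 + (w_i - 1) p)`. -/
noncomputable def Qw (N : ℕ) (w : Fin N → ℝ) (p : ℝ) : ℝ := ∏ i, (1 + (w i - 1) * p)

/-- The auxiliary function `g` with `S = E_P / (T_s - T_c + g)`. -/
noncomputable def gW (N : ℕ) (σ Tc : ℝ) (w : Fin N → ℝ) (p : ℝ) : ℝ :=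
  ((σ - Tc) * (1 - p) + Tc * Qw N w p / (1 - p) ^ (N - 1)) / (p * ∑ i, w i)

lemma fac_pos {wi p : ℝ} (hwi : 0 < wi) (hp : 0 ≤ p) (hp1 : p ≤ 1) :
    0 < 1 + (wi - 1) * p := by
  rcases eq_or_lt_of_le hp1 with h | h
  · rw [h]; nlinarith
  · nlinarith [mul_nonneg hwi.le hp]

section Basic

variable {N : ℕ} {σ Tc : ℝ} {w : Fin N → ℝ} {p : ℝ}

lemma Qw_pos (hw : ∀ i, 0 < w i) (hp : 0 ≤ p) (hp1 : p ≤ 1) : 0 < Qw N w p :=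
  Finset.prod_pos fun i _ => fac_pos (hw i) hp hp1

lemma PIw_eq : PIw N w p = (1 - p) ^ N / Qw N w p := by
  rw [PIw, Qw, Finset.prod_div_distrib, Finset.prod_const, Finset.card_univ,
    Fintype.card_fin]

lemma PIw_pos (hw : ∀ i, 0 < w i) (hp : 0 ≤ p) (hp1 : p < 1) : 0 < PIw N w p :=
  Finset.prod_pos fun i _ => div_pos (by linarith) (fac_pos (hw i) hp hp1.le)

lemma factor_nonneg {i : Fin N} (hw : ∀ i, 0 < w i) (hp : 0 ≤ p) (hp1 : p ≤ 1) :
    0 ≤ (1 - p) / (1 + (w i - 1) * p) :=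
  div_nonneg (by linarith) (fac_pos (hw i) hp hp1).le

lemma factor_le_one {i : Fin N} (hw : ∀ i, 0 < w i) (hp : 0 ≤ p) (hp1 : p ≤ 1) :
    (1 - p) / (1 + (w i - 1) * p) ≤ 1 := by
  rw [div_le_one (fac_pos (hw i) hp hp1)]
  nlinarith [mul_nonneg (hw i).le hp]

lemma sumw_pos (hN : 0 < N) (hw : ∀ i, 0 < w i) : 0 < ∑ i, w i :=
  Finset.sum_pos (fun i _ => hw i) (univ_nonempty_iff.2 (Fin.pos_iff_nonempty.1 hN))

lemma Qw_gt (hN : 0 < N) (hw : ∀ i, 0 < w i) (hp : 0 < p) (hp1 : p < 1) :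
    (1 - p) ^ N < Qw N w p := by
  have : (1 - p) ^ N = ∏ _i : Fin N, (1 - p) := by
    rw [Finset.prod_const, Finset.card_univ, Fintype.card_fin]
  rw [this, Qw]
  refine Finset.prod_lt_prod_of_nonempty (fun i _ => by linarith)
    (fun i _ => by nlinarith [mul_pos (hw i) hp])
    (univ_nonempty_iff.2 (Fin.pos_iff_nonempty.1 hN))

lemma pow_split (hN : 0 < N) : (1 - p) ^ N = (1 - p) ^ (N - 1) * (1 - p) := by
  rw [← pow_succ, Nat.sub_add_cancel hN]

lemma gW_pos (hN : 0 < N) (hw : ∀ i, 0 < w i) (hσ : 0 < σ) (hTc : σ ≤ Tc)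
    (hp : 0 < p) (hp1 : p < 1) : 0 < gW N σ Tc w p := by
  have hr : (0:ℝ) < 1 - p := by linarith
  have hq := Qw_gt hN hw hp hp1
  have hrpow : (0:ℝ) < (1 - p) ^ (N - 1) := pow_pos hr _
  have key : (σ - Tc) * (1 - p) + Tc * Qw N w p / (1 - p) ^ (N - 1)
      = (σ * (1 - p) ^ N + Tc * (Qw N w p - (1 - p) ^ N)) / (1 - p) ^ (N - 1) := by
    rw [pow_split hN]; field_simp; ring
  rw [gW, key]
  have h1 : 0 < σ * (1 - p) ^ N := mul_pos hσ (pow_pos hr _)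
  have h2 : 0 < Tc * (Qw N w p - (1 - p) ^ N) := mul_pos (by linarith) (by linarith)
  exact div_pos (div_pos (by linarith) hrpow) (mul_pos hp (sumw_pos hN hw))

lemma Ssys_eq (EP Ts : ℝ) (hN : 0 < N) (hw : ∀ i, 0 < w i) (hσ : 0 < σ)
    (hp : 0 < p) (hp1 : p < 1) :
    Ssys N EP σ Ts Tc w p = EP / (Ts - Tc + gW N σ Tc w p) := by
  have hr : (0:ℝ) < 1 - p := by linarith
  have hq : 0 < Qw N w p := Qw_pos hw hp.le hp1.le
  have hrpow : (0:ℝ) < (1 - p) ^ (N - 1) := pow_pos hr _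
  have hW : 0 < ∑ i, w i := sumw_pos hN hw
  have hPT : PTw N w p = p / (1 - p) * ∑ i, w i := rfl
  have hPI : PIw N w p = (1 - p) ^ N / Qw N w p := PIw_eq
  have hD : PIw N w p * σ + PTw N w p * PIw N w p * (Ts - Tc) + (1 - PIw N w p) * Tc
      = PTw N w p * PIw N w p * (Ts - Tc + gW N σ Tc w p) := by
    rw [hPT, hPI, gW, pow_split hN]
    field_simp
    ring
  rw [Ssys, hD]
  rw [show EP * PTw N w p * PIw N w p = PTw N w p * PIw N w p * EP by ring,
    mul_div_mul_left]
  have hPIpos : 0 < PIw N w p := PIw_pos hw hp.le hp1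
  have hPTpos : 0 < PTw N w p := by rw [hPT]; positivity
  positivity

end Basic

section Deriv

variable {N : ℕ} {σ Tc : ℝ} {w : Fin N → ℝ} {p : ℝ}

lemma hasDerivAt_fac (i : Fin N) :
    HasDerivAt (fun p => 1 + (w i - 1) * p) (w i - 1) p := by
  simpa using ((hasDerivAt_id p).const_mul (w i - 1)).const_add 1

lemma hasDerivAt_wAttempt (i : Fin N) (h : 1 + (w i - 1) * p ≠ 0) :
    HasDerivAt (wAttempt (w i)) (w i / (1 + (w i - 1) * p) ^ 2) p := by
  have h1 : HasDerivAt (fun p : ℝ => w i * p) (w i) p := by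
    simpa using (hasDerivAt_id p).const_mul (w i)
  have h2 := h1.div (hasDerivAt_fac i) h
  refine h2.congr_deriv ?_
  congr 1
  ring

lemma hasDerivAt_fcn (i : Fin N) (h : 1 + (w i - 1) * p ≠ 0) :
    HasDerivAt (fun p => (1 - p) / (1 + (w i - 1) * p))
      (-(w i) / (1 + (w i - 1) * p) ^ 2) p := by
  have h1 : HasDerivAt (fun p : ℝ => 1 - p) (-1) p := by
    exact (hasDerivAt_id' p).const_sub 1
  have h2 := h1.div (hasDerivAt_fac i) h
  refine h2.congr_deriv ?_
  congr 1
  ring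

lemma hasDerivAt_Qw :
    HasDerivAt (Qw N w)
      (∑ i, (∏ j ∈ univ.erase i, (1 + (w j - 1) * p)) * (w i - 1)) p := by
  have := HasDerivAt.fun_finsetProd (x := p) (u := univ) (f := fun i p => 1 + (w i - 1) * p)
      (f' := fun i => w i - 1) (fun i _ => hasDerivAt_fac i)
  simp only [smul_eq_mul] at this
  exact this

lemma hasDerivAt_PIw (h : ∀ i : Fin N, 1 + (w i - 1) * p ≠ 0) :
    HasDerivAt (PIw N w)
      (∑ i, (∏ j ∈ univ.erase i, (1 - p) / (1 + (w j - 1) * p)) *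
        (-(w i) / (1 + (w i - 1) * p) ^ 2)) p := by
  have := HasDerivAt.fun_finsetProd (x := p) (u := univ)
      (f := fun i p => (1 - p) / (1 + (w i - 1) * p))
      (f' := fun i => -(w i) / (1 + (w i - 1) * p) ^ 2) (fun i _ => hasDerivAt_fcn i (h i))
  simp only [smul_eq_mul] at this
  exact this

lemma hasDerivAt_fW (h : ∀ i : Fin N, 1 + (w i - 1) * p ≠ 0) :
    HasDerivAt (fW N σ Tc w)
      ((Tc / σ) * (0 - (∑ i, w i / (1 + (w i - 1) * p) ^ 2) -
          ∑ i, (∏ j ∈ univ.erase i, (1 - p) / (1 + (w j - 1) * p)) *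
            (-(w i) / (1 + (w i - 1) * p) ^ 2)) +
        ∑ i, (∏ j ∈ univ.erase i, (1 - p) / (1 + (w j - 1) * p)) *
          (-(w i) / (1 + (w i - 1) * p) ^ 2)) p := by
  have hsum : HasDerivAt (fun p => ∑ i, wAttempt (w i) p)
      (∑ i, w i / (1 + (w i - 1) * p) ^ 2) p :=
    HasDerivAt.fun_sum fun i _ => hasDerivAt_wAttempt i (h i)
  have hPI := hasDerivAt_PIw h
  exact ((((hasDerivAt_const p (1:ℝ)).sub hsum).sub hPI).const_mul (Tc / σ)).add hPI

lemma deriv_fW_neg (hN : 0 < N) (hw : ∀ i, 0 < w i) (hσ : 0 < σ) (hTc : σ ≤ Tc)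
    (hp : 0 < p) (hp1 : p < 1) : deriv (fW N σ Tc w) p < 0 := by
  have hfac : ∀ i : Fin N, 0 < 1 + (w i - 1) * p := fun i => fac_pos (hw i) hp.le hp1.le
  have h : ∀ i : Fin N, 1 + (w i - 1) * p ≠ 0 := fun i => (hfac i).ne'
  rw [(hasDerivAt_fW h).deriv]
  have key : (Tc / σ) * (0 - (∑ i, w i / (1 + (w i - 1) * p) ^ 2) -
          ∑ i, (∏ j ∈ univ.erase i, (1 - p) / (1 + (w j - 1) * p)) *
            (-(w i) / (1 + (w i - 1) * p) ^ 2)) +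
        ∑ i, (∏ j ∈ univ.erase i, (1 - p) / (1 + (w j - 1) * p)) *
          (-(w i) / (1 + (w i - 1) * p) ^ 2)
      = ∑ i, (w i / (1 + (w i - 1) * p) ^ 2) *
          (-(Tc / σ) + ((Tc / σ) - 1) *
            ∏ j ∈ univ.erase i, (1 - p) / (1 + (w j - 1) * p)) := by
    rw [show ∀ c A D : ℝ, c * (0 - A - D) + D = (-c) * A + (1 - c) * D from
      fun c A D => by ring]
    rw [Finset.mul_sum, Finset.mul_sum, ← Finset.sum_add_distrib]
    exact Finset.sum_congr rfl fun i _ => by ring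
  rw [key]
  have hc : 1 ≤ Tc / σ := (one_le_div hσ).2 hTc
  refine Finset.sum_neg (fun i _ => ?_) (univ_nonempty_iff.2 (Fin.pos_iff_nonempty.1 hN))
  have ha : 0 < w i / (1 + (w i - 1) * p) ^ 2 := div_pos (hw i) (pow_pos (hfac i) 2)
  have hP0 : 0 ≤ ∏ j ∈ univ.erase i, (1 - p) / (1 + (w j - 1) * p) :=
    Finset.prod_nonneg fun j _ => factor_nonneg hw hp.le hp1.le
  have hP1 : ∏ j ∈ univ.erase i, (1 - p) / (1 + (w j - 1) * p) ≤ 1 :=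
    Finset.prod_le_one (fun j _ => factor_nonneg hw hp.le hp1.le)
      (fun j _ => factor_le_one hw hp.le hp1.le)
  have : -(Tc / σ) + ((Tc / σ) - 1) *
      ∏ j ∈ univ.erase i, (1 - p) / (1 + (w j - 1) * p) < 0 := by nlinarith
  exact mul_neg_of_pos_of_neg ha this

lemma hasDerivAt_gW (hN : 2 ≤ N) (hw : ∀ i, 0 < w i) (hσ : 0 < σ)
    (hp : 0 < p) (hp1 : p < 1) :
    HasDerivAt (gW N σ Tc w)
      (-(σ * Qw N w p * fW N σ Tc w p) / ((∑ i, w i) * p ^ 2 * (1 - p) ^ N)) p := by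
  have hr : (0:ℝ) < 1 - p := by linarith
  have hq : 0 < Qw N w p := Qw_pos hw hp.le hp1.le
  have hW : 0 < ∑ i, w i := sumw_pos (by omega) hw
  have hfac : ∀ i : Fin N, 0 < 1 + (w i - 1) * p := fun i => fac_pos (hw i) hp.le hp1.le
  have h1m : HasDerivAt (fun p : ℝ => 1 - p) (-1) p := by
    exact (hasDerivAt_id' p).const_sub 1
  have hpow : HasDerivAt (fun p : ℝ => (1 - p) ^ (N - 1))
      (↑(N - 1) * (1 - p) ^ (N - 1 - 1) * -1) p := h1m.pow (N - 1)
  have hnum1 : HasDerivAt (fun p => Tc * Qw N w p)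
      (Tc * ∑ i, (∏ j ∈ univ.erase i, (1 + (w j - 1) * p)) * (w i - 1)) p :=
    hasDerivAt_Qw.const_mul Tc
  have hdivQ := hnum1.div hpow (pow_ne_zero _ hr.ne')
  have hlin : HasDerivAt (fun p : ℝ => (σ - Tc) * (1 - p)) ((σ - Tc) * -1) p :=
    h1m.const_mul (σ - Tc)
  have hnum := hlin.add hdivQ
  have hden : HasDerivAt (fun p : ℝ => p * ∑ i, w i) (1 * ∑ i, w i) p :=
    (hasDerivAt_id p).mul_const _
  have hg := hnum.div hden (by positivity)
  have hfinal :
      (((σ - Tc) * -1 +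
          ((Tc * ∑ i, (∏ j ∈ univ.erase i, (1 + (w j - 1) * p)) * (w i - 1)) *
              (1 - p) ^ (N - 1)
            - Tc * Qw N w p * (↑(N - 1) * (1 - p) ^ (N - 1 - 1) * -1)) /
              ((1 - p) ^ (N - 1)) ^ 2)
          * (p * ∑ i, w i)
        - ((σ - Tc) * (1 - p) + Tc * Qw N w p / (1 - p) ^ (N - 1)) * (1 * ∑ i, w i))
        / (p * ∑ i, w i) ^ 2
      = -(σ * Qw N w p * fW N σ Tc w p) / ((∑ i, w i) * p ^ 2 * (1 - p) ^ N) := by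
    set t : ℝ := ∑ i, (1 + (w i - 1) * p)⁻¹ with ht
    have idQ : (∑ i, (∏ j ∈ univ.erase i, (1 + (w j - 1) * p)) * (w i - 1)) * p
        = Qw N w p * ((N : ℝ) - t) := by
      rw [Finset.sum_mul]
      have hrhs : Qw N w p * ((N : ℝ) - t)
          = ∑ i, Qw N w p * (1 - (1 + (w i - 1) * p)⁻¹) := by
        rw [← Finset.mul_sum, Finset.sum_sub_distrib, Finset.sum_const, card_univ,
          Fintype.card_fin, nsmul_eq_mul, mul_one]
      rw [hrhs]
      refine Finset.sum_congr rfl fun i _ => ?_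
      rw [show Qw N w p = (1 + (w i - 1) * p) * ∏ j ∈ univ.erase i, (1 + (w j - 1) * p) from
        (Finset.mul_prod_erase univ _ (mem_univ i)).symm]
      rw [show ((1 + (w i - 1) * p) * ∏ j ∈ univ.erase i, (1 + (w j - 1) * p)) *
            (1 - (1 + (w i - 1) * p)⁻¹)
          = (∏ j ∈ univ.erase i, (1 + (w j - 1) * p)) *
            ((1 + (w i - 1) * p) * (1 - (1 + (w i - 1) * p)⁻¹)) from by ring,
        mul_one_sub, mul_inv_cancel₀ (hfac i).ne']
      ring
    have hQs : ∑ i, (∏ j ∈ univ.erase i, (1 + (w j - 1) * p)) * (w i - 1)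
        = Qw N w p * ((N : ℝ) - t) / p := by
      rw [eq_div_iff hp.ne']; exact idQ
    have idA : ∑ i, wAttempt (w i) p = (N : ℝ) - (1 - p) * t := by
      have : ∀ i : Fin N, wAttempt (w i) p = 1 - (1 - p) * (1 + (w i - 1) * p)⁻¹ := by
        intro i
        have hfne : (1 + (w i - 1) * p) ≠ 0 := (hfac i).ne'
        rw [wAttempt, div_eq_iff hfne, sub_mul, mul_assoc (1 - p), inv_mul_cancel₀ hfne]
        ring
      rw [Finset.sum_congr rfl fun i _ => this i, Finset.sum_sub_distrib, Finset.sum_const,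
        card_univ, Fintype.card_fin, nsmul_eq_mul, mul_one, ← Finset.mul_sum]
    rw [hQs, fW, idA, PIw_eq]
    have hcast : (↑(N - 1) : ℝ) = (N : ℝ) - 1 := by
      rw [Nat.cast_sub (by omega)]; norm_num
    have he1 : N - 1 - 1 = N - 2 := by omega
    have he2 : (1 - p) ^ (N - 1) = (1 - p) ^ (N - 2) * (1 - p) := by
      rw [← pow_succ]; congr 1; omega
    have he3 : (1 - p) ^ N = (1 - p) ^ (N - 2) * (1 - p) ^ 2 := by
      rw [← pow_add]; congr 1; omega
    rw [hcast, he1, he2, he3]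
    have ha : (1 - p) ^ (N - 2) ≠ 0 := pow_ne_zero _ hr.ne'
    field_simp
    ring
  rw [← hfinal]
  exact hg

end Deriv

section Root

variable {N : ℕ} {σ Tc : ℝ} {w : Fin N → ℝ}

lemma contOn_fW (hw : ∀ i, 0 < w i) : ContinuousOn (fW N σ Tc w) (Set.Icc 0 1) := by
  have hfac : ∀ (i : Fin N) p, p ∈ Set.Icc (0:ℝ) 1 → (1 + (w i - 1) * p) ≠ 0 :=
    fun i p hp => (fac_pos (hw i) hp.1 hp.2).ne'
  have hsum : ContinuousOn (fun p => ∑ i, wAttempt (w i) p) (Set.Icc (0:ℝ) 1) := by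
    apply continuousOn_finset_sum
    intro i _
    show ContinuousOn (fun p => w i * p / (1 + (w i - 1) * p)) _
    exact ContinuousOn.div (by fun_prop) (by fun_prop) (fun p hp => hfac i p hp)
  have hPI : ContinuousOn (PIw N w) (Set.Icc (0:ℝ) 1) := by
    show ContinuousOn (fun p => ∏ i, (1 - p) / (1 + (w i - 1) * p)) _
    apply continuousOn_finset_prod
    intro i _
    exact ContinuousOn.div (by fun_prop) (by fun_prop) (fun p hp => hfac i p hp)
  show ContinuousOn (fun p => (Tc / σ) * (1 - (∑ i, wAttempt (w i) p) - PIw N w p) + PIw N w p) _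
  exact (continuousOn_const.mul ((continuousOn_const.sub hsum).sub hPI)).add hPI

lemma fW_zero : fW N σ Tc w 0 = 1 := by
  simp [fW, wAttempt, PIw]

lemma fW_one (hN : 0 < N) (hw : ∀ i, 0 < w i) :
    fW N σ Tc w 1 = (Tc / σ) * (1 - N) := by
  have h1 : ∀ i : Fin N, wAttempt (w i) 1 = 1 := by
    intro i
    rw [wAttempt, show 1 + (w i - 1) * 1 = w i by ring, mul_one, div_self (hw i).ne']
  have h2 : PIw N w 1 = 0 := by
    rw [PIw_eq, show (1:ℝ) - 1 = 0 by ring, zero_pow hN.ne', zero_div]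
  rw [fW, h2, Finset.sum_congr rfl fun i _ => h1 i, Finset.sum_const, card_univ,
    Fintype.card_fin, nsmul_eq_mul, mul_one]
  ring

lemma strictAntiOn_fW (hN : 0 < N) (hw : ∀ i, 0 < w i) (hσ : 0 < σ) (hTc : σ ≤ Tc) :
    StrictAntiOn (fW N σ Tc w) (Set.Icc 0 1) := by
  refine strictAntiOn_of_deriv_neg (convex_Icc 0 1) (contOn_fW hw) ?_
  rw [interior_Icc]
  exact fun x hx => deriv_fW_neg hN hw hσ hTc hx.1 hx.2

end Root

/-- The system throughput `p ↦ S(p, W)` is strictly quasi-concave on `(0,1)`: there is a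
unique `p* ∈ (0,1)` such that `S(·, W)` is strictly increasing on `(0, p*)` and strictly
decreasing on `(p*, 1)`. -/
theorem Ssys_strict_quasiconcave (N : ℕ) (hN : 2 ≤ N) (EP σ Ts Tc : ℝ)
    (hEP : 0 < EP) (hσ : 0 < σ) (hTc : σ ≤ Tc) (hTs : Tc ≤ Ts)
    (w : Fin N → ℝ) (hw : ∀ i, 0 < w i) :
    ∃! pstar : ℝ, pstar ∈ Set.Ioo (0 : ℝ) 1 ∧
      StrictMonoOn (Ssys N EP σ Ts Tc w) (Set.Ioo 0 pstar) ∧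
      StrictAntiOn (Ssys N EP σ Ts Tc w) (Set.Ioo pstar 1) := by
  have hN0 : 0 < N := by omega
  have hc : 1 ≤ Tc / σ := (one_le_div hσ).2 hTc
  -- fW has a root in (0,1)
  have hfW1 : fW N σ Tc w 1 < 0 := by
    rw [fW_one hN0 hw]
    have : (1:ℝ) - N ≤ -1 := by
      have : (2:ℝ) ≤ N := by exact_mod_cast hN
      linarith
    nlinarith
  have hfW0 : (0:ℝ) < fW N σ Tc w 0 := by rw [fW_zero]; norm_num
  obtain ⟨pstar, hpmem, hproot⟩ :=
    intermediate_value_Ioo' zero_le_one (contOn_fW hw) (Set.mem_Ioo.2 ⟨hfW1, hfW0⟩)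
  have hanti := strictAntiOn_fW hN0 hw hσ hTc
  -- sign of fW on both sides of the root
  have hpos : ∀ x ∈ Set.Ioo (0:ℝ) pstar, 0 < fW N σ Tc w x := by
    intro x hx
    have := hanti (Set.mem_Icc.2 ⟨hx.1.le, by linarith [hpmem.2, hx.2]⟩)
      (Set.mem_Icc.2 ⟨hpmem.1.le, hpmem.2.le⟩) hx.2
    rw [hproot] at this
    exact this
  have hneg : ∀ x ∈ Set.Ioo pstar (1:ℝ), fW N σ Tc w x < 0 := by
    intro x hx
    have := hanti (Set.mem_Icc.2 ⟨hpmem.1.le, hpmem.2.le⟩)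
      (Set.mem_Icc.2 ⟨by linarith [hpmem.1, hx.1], hx.2.le⟩) hx.1
    rw [hproot] at this
    exact this
  -- transfer lemma between Ssys and gW
  have hWpos : 0 < ∑ i, w i := sumw_pos hN0 hw
  have hdenpos : ∀ x ∈ Set.Ioo (0:ℝ) 1, 0 < Ts - Tc + gW N σ Tc w x := by
    intro x hx
    have := gW_pos hN0 hw hσ hTc hx.1 hx.2
    linarith
  have htrans : ∀ a ∈ Set.Ioo (0:ℝ) 1, ∀ b ∈ Set.Ioo (0:ℝ) 1,
      (Ssys N EP σ Ts Tc w a < Ssys N EP σ Ts Tc w b ↔ gW N σ Tc w b < gW N σ Tc w a) := by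
    intro a ha b hb
    rw [Ssys_eq EP Ts hN0 hw hσ ha.1 ha.2, Ssys_eq EP Ts hN0 hw hσ hb.1 hb.2,
      div_lt_div_iff₀ (hdenpos a ha) (hdenpos b hb), mul_lt_mul_iff_right₀ hEP,
      add_lt_add_iff_left]
  -- monotonicity of gW on both sides
  have hganti : StrictAntiOn (gW N σ Tc w) (Set.Ioo 0 pstar) := by
    refine strictAntiOn_of_deriv_neg (convex_Ioo _ _) ?_ ?_
    · intro x hx
      exact (hasDerivAt_gW hN hw hσ hx.1 (by linarith [hx.2, hpmem.2])).continuousAt.continuousWithinAt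
    · rw [interior_Ioo]
      intro x hx
      have hx1 : x < 1 := by linarith [hx.2, hpmem.2]
      rw [(hasDerivAt_gW hN hw hσ hx.1 hx1).deriv]
      have hnum : 0 < σ * Qw N w x * fW N σ Tc w x :=
        mul_pos (mul_pos hσ (Qw_pos hw hx.1.le hx1.le)) (hpos x hx)
      have hden : 0 < (∑ i, w i) * x ^ 2 * (1 - x) ^ N :=
        mul_pos (mul_pos hWpos (pow_pos hx.1 2)) (pow_pos (by linarith : (0:ℝ) < 1 - x) N)
      exact div_neg_of_neg_of_pos (by linarith) hden
  have hgmono : StrictMonoOn (gW N σ Tc w) (Set.Ioo pstar 1) := by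
    refine strictMonoOn_of_deriv_pos (convex_Ioo _ _) ?_ ?_
    · intro x hx
      exact (hasDerivAt_gW hN hw hσ (by linarith [hx.1, hpmem.1]) hx.2).continuousAt.continuousWithinAt
    · rw [interior_Ioo]
      intro x hx
      have hx0 : 0 < x := by linarith [hx.1, hpmem.1]
      rw [(hasDerivAt_gW hN hw hσ hx0 hx.2).deriv]
      have hnum : σ * Qw N w x * fW N σ Tc w x < 0 :=
        mul_neg_of_pos_of_neg (mul_pos hσ (Qw_pos hw hx0.le hx.2.le)) (hneg x hx)
      have hden : 0 < (∑ i, w i) * x ^ 2 * (1 - x) ^ N :=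
        mul_pos (mul_pos hWpos (pow_pos hx0 2)) (pow_pos (by linarith [hx.2] : (0:ℝ) < 1 - x) N)
      exact div_pos (by linarith) hden
  -- Ssys monotonicity
  have hSmono : StrictMonoOn (Ssys N EP σ Ts Tc w) (Set.Ioo 0 pstar) := by
    intro a ha b hb hab
    have ha1 : a ∈ Set.Ioo (0:ℝ) 1 := ⟨ha.1, by linarith [ha.2, hpmem.2]⟩
    have hb1 : b ∈ Set.Ioo (0:ℝ) 1 := ⟨hb.1, by linarith [hb.2, hpmem.2]⟩
    exact (htrans a ha1 b hb1).2 (hganti ha hb hab)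
  have hSanti : StrictAntiOn (Ssys N EP σ Ts Tc w) (Set.Ioo pstar 1) := by
    intro a ha b hb hab
    have ha1 : a ∈ Set.Ioo (0:ℝ) 1 := ⟨by linarith [ha.1, hpmem.1], ha.2⟩
    have hb1 : b ∈ Set.Ioo (0:ℝ) 1 := ⟨by linarith [hb.1, hpmem.1], hb.2⟩
    exact (htrans b hb1 a ha1).2 (hgmono ha hb hab)
  refine ⟨pstar, ⟨hpmem, hSmono, hSanti⟩, ?_⟩
  -- uniqueness
  rintro y ⟨hymem, hymono, hyanti⟩
  by_contra hne
  rcases lt_or_gt_of_ne hne with hlt | hgt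
  · -- y < pstar : use points in (y, pstar)
    obtain ⟨a, b, h1, h2, h3⟩ : ∃ a b : ℝ, y < a ∧ a < b ∧ b < pstar :=
      ⟨y + (pstar - y) / 3, y + 2 * (pstar - y) / 3, by linarith, by linarith, by linarith⟩
    have hy0 : 0 < y := hymem.1
    have hp1 : pstar < 1 := hpmem.2
    have hA : Ssys N EP σ Ts Tc w a < Ssys N EP σ Ts Tc w b :=
      hSmono ⟨by linarith, by linarith⟩ ⟨by linarith, by linarith⟩ h2
    have hB : Ssys N EP σ Ts Tc w b < Ssys N EP σ Ts Tc w a :=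
      hyanti ⟨by linarith, by linarith⟩ ⟨by linarith, by linarith⟩ h2
    linarith
  · -- pstar < y : use points in (pstar, y)
    obtain ⟨a, b, h1, h2, h3⟩ : ∃ a b : ℝ, pstar < a ∧ a < b ∧ b < y :=
      ⟨pstar + (y - pstar) / 3, pstar + 2 * (y - pstar) / 3, by linarith, by linarith,
        by linarith⟩
    have hp0 : 0 < pstar := hpmem.1
    have hy1 : y < 1 := hymem.2
    have hA : Ssys N EP σ Ts Tc w a < Ssys N EP σ Ts Tc w b :=
      hymono ⟨by linarith, by linarith⟩ ⟨by linarith, by linarith⟩ h2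
    have hB : Ssys N EP σ Ts Tc w b < Ssys N EP σ Ts Tc w a :=
      hSanti ⟨by linarith, by linarith⟩ ⟨by linarith, by linarith⟩ h2
    linarith
end

section
/- Suppose N ≥ 2 and w_1,…,w_N > 0, and define f(p, W) = T_c*·(1 − ∑_{i=1}^N p_i(p) − P_I(p)) + P_I(p). Then for every p ∈ (0,1), the derivative ∂S(p, W)/∂p exists and has the same sign as f(p, W): it is positive when f(p, W) > 0, negative when f(p, W) < 0, and zero when f(p, W) = 0. -/
open Finset

/-- Derivative of `P_I`. -/
lemma PIw_hasDerivAt (N : ℕ) (w : Fin N → ℝ) (hw : ∀ i, 0 < w i) (p : ℝ)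
    (hp0 : 0 < p) (hp1 : p < 1) :
    HasDerivAt (PIw N w)
      (-(PIw N w p * (∑ i, wAttempt (w i) p)) / (p * (1 - p))) p := by
  have h1p : (0:ℝ) < 1 - p := by linarith
  have hq : ∀ i, 0 < 1 + (w i - 1) * p := by
    intro i; have := hw i; nlinarith
  have hfac : ∀ i ∈ Finset.univ, HasDerivAt (fun x : ℝ => (1 - x) / (1 + (w i - 1) * x))
      (-(w i) / (1 + (w i - 1) * p) ^ 2) p := by
    intro i _
    have hc : HasDerivAt (fun x : ℝ => 1 - x) (-1) p := by
      simpa using (hasDerivAt_id p).const_sub 1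
    have hd : HasDerivAt (fun x : ℝ => 1 + (w i - 1) * x) (w i - 1) p := by
      simpa using ((hasDerivAt_id p).const_mul (w i - 1)).const_add 1
    have := hc.div hd (hq i).ne'
    refine this.congr_deriv ?_
    ring
  have hprod := HasDerivAt.fun_finsetProd hfac
  have heq : (∑ i, (∏ j ∈ Finset.univ.erase i, (1 - p) / (1 + (w j - 1) * p)) •
        (-(w i) / (1 + (w i - 1) * p) ^ 2))
      = -(PIw N w p * (∑ i, wAttempt (w i) p)) / (p * (1 - p)) := by
    have hterm : ∀ i ∈ Finset.univ, (∏ j ∈ Finset.univ.erase i, (1 - p) / (1 + (w j - 1) * p)) •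
        (-(w i) / (1 + (w i - 1) * p) ^ 2)
        = -(PIw N w p * wAttempt (w i) p) / (p * (1 - p)) := by
      intro i _
      have hpe : ((1 - p) / (1 + (w i - 1) * p)) * ∏ j ∈ Finset.univ.erase i, (1 - p) / (1 + (w j - 1) * p) = PIw N w p := by
        rw [PIw]; exact Finset.mul_prod_erase _ (fun j => (1 - p) / (1 + (w j - 1) * p)) (Finset.mem_univ i)
      have hfi : (1 - p) / (1 + (w i - 1) * p) ≠ 0 := (div_pos h1p (hq i)).ne'
      set Pe := ∏ j ∈ Finset.univ.erase i, (1 - p) / (1 + (w j - 1) * p) with hPe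
      have hqi : (1 + (w i - 1) * p) ≠ 0 := (hq i).ne'
      have h1p' : (1 - p) ≠ 0 := h1p.ne'
      have hprode : Pe = PIw N w p * (1 + (w i - 1) * p) / (1 - p) := by
        rw [← hpe]
        field_simp
        rw [mul_div_cancel_right₀ _ (show (1 + p * (w i - 1)) ≠ 0 by intro h; apply hqi; linear_combination h)]
      rw [smul_eq_mul, hprode, wAttempt]
      field_simp
    rw [Finset.sum_congr rfl hterm, ← Finset.sum_div]
    congr 1
    rw [Finset.mul_sum, ← Finset.sum_neg_distrib]
  rw [← heq]
  unfold PIw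
  exact hprod

set_option maxHeartbeats 2000000 in
/-- For every `p ∈ (0,1)`, the derivative `∂S(p,W)/∂p` exists and has the same sign as
`f(p, W)`: positive when `f(p,W) > 0`, negative when `f(p,W) < 0`, and zero when
`f(p,W) = 0`. -/
theorem deriv_Ssys_sign_eq_fW (N : ℕ) (hN : 2 ≤ N) (EP σ Ts Tc : ℝ)
    (hEP : 0 < EP) (hσ : 0 < σ) (hTc : σ ≤ Tc) (hTs : Tc ≤ Ts)
    (w : Fin N → ℝ) (hw : ∀ i, 0 < w i)
    (p : ℝ) (hp : p ∈ Set.Ioo (0 : ℝ) 1) :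
    ∃ d : ℝ, HasDerivAt (Ssys N EP σ Ts Tc w) d p ∧
      (0 < fW N σ Tc w p → 0 < d) ∧
      (fW N σ Tc w p < 0 → d < 0) ∧
      (fW N σ Tc w p = 0 → d = 0) := by
  obtain ⟨hp0, hp1⟩ := hp
  have h1p : (0:ℝ) < 1 - p := by linarith
  have hq : ∀ i, 0 < 1 + (w i - 1) * p := by
    intro i; have := hw i; nlinarith
  set A := PIw N w p with hA
  set Sig := ∑ i, wAttempt (w i) p with hSig
  set Sw := ∑ i, w i with hSw
  set B := PTw N w p with hB
  have hApos : 0 < A := by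
    rw [hA, PIw]; exact Finset.prod_pos fun i _ => div_pos h1p (hq i)
  have hAle : A ≤ 1 := by
    rw [hA, PIw]
    refine Finset.prod_le_one (fun i _ => (div_pos h1p (hq i)).le) (fun i _ => ?_)
    rw [div_le_one (hq i)]
    have := hw i
    nlinarith
  have hSwpos : 0 < Sw := by
    rw [hSw]
    refine Finset.sum_pos (fun i _ => hw i) ⟨⟨0, by omega⟩, Finset.mem_univ _⟩
  have hBval : B = p / (1 - p) * Sw := by rw [hB, PTw]
  have hBpos : 0 < B := by rw [hBval]; exact mul_pos (div_pos hp0 h1p) hSwpos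
  have hTcpos : 0 < Tc := lt_of_lt_of_le hσ hTc
  have hdA : HasDerivAt (PIw N w) (-(A * Sig) / (p * (1 - p))) p :=
    PIw_hasDerivAt N w hw p hp0 hp1
  have hdB : HasDerivAt (PTw N w) (Sw / (1 - p) ^ 2) p := by
    have hid : HasDerivAt (fun x : ℝ => x) 1 p := hasDerivAt_id p
    have hc : HasDerivAt (fun x : ℝ => 1 - x) (-1) p := by
      simpa using hid.const_sub 1
    have h1 : HasDerivAt (fun x : ℝ => x / (1 - x))
        ((1 * (1 - p) - p * (-1)) / (1 - p) ^ 2) p := hid.div hc h1p.ne'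
    have h2 := h1.mul_const Sw
    have : PTw N w = fun x : ℝ => x / (1 - x) * Sw := by
      funext x; rw [PTw, hSw]
    rw [this]
    refine h2.congr_deriv ?_
    ring
  have hNum : HasDerivAt (fun x => EP * PTw N w x * PIw N w x)
      ((EP * (Sw / (1 - p) ^ 2)) * A + (EP * B) * (-(A * Sig) / (p * (1 - p)))) p :=
    (hdB.const_mul EP).mul hdA
  have hDen : HasDerivAt
      (fun x => PIw N w x * σ + PTw N w x * PIw N w x * (Ts - Tc) + (1 - PIw N w x) * Tc)
      ((-(A * Sig) / (p * (1 - p))) * σ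
        + ((Sw / (1 - p) ^ 2) * A + B * (-(A * Sig) / (p * (1 - p)))) * (Ts - Tc)
        + (-(-(A * Sig) / (p * (1 - p)))) * Tc) p :=
    ((hdA.mul_const σ).add ((hdB.mul hdA).mul_const (Ts - Tc))).add
      ((hdA.const_sub 1).mul_const Tc)
  have hDpos : 0 < A * σ + B * A * (Ts - Tc) + (1 - A) * Tc := by
    have h1 : 0 < A * σ := mul_pos hApos hσ
    have h2 : 0 ≤ B * A * (Ts - Tc) :=
      mul_nonneg (mul_nonneg hBpos.le hApos.le) (by linarith)
    have h3 : 0 ≤ (1 - A) * Tc := mul_nonneg (by linarith) hTcpos.le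
    linarith
  have hD0 : A * σ + B * A * (Ts - Tc) + (1 - A) * Tc ≠ 0 := hDpos.ne'
  have hS := hNum.div hDen hD0
  set C : ℝ := EP * Sw * A * σ / ((1 - p) ^ 2 * (A * σ + B * A * (Ts - Tc) + (1 - A) * Tc) ^ 2)
    with hC
  have hCpos : 0 < C := by
    rw [hC]
    apply div_pos
    · exact mul_pos (mul_pos (mul_pos hEP hSwpos) hApos) hσ
    · exact mul_pos (pow_pos h1p 2) (pow_pos hDpos 2)
  have hfval : fW N σ Tc w p = (Tc / σ) * (1 - Sig - A) + A := by rw [fW]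
  have hσ' : σ ≠ 0 := hσ.ne'
  have hp0' : p ≠ 0 := hp0.ne'
  have h1p' : (1 - p) ≠ 0 := h1p.ne'
  have hkey : (EP * (Sw / (1 - p) ^ 2) * A + EP * B * (-(A * Sig) / (p * (1 - p)))) *
        (A * σ + B * A * (Ts - Tc) + (1 - A) * Tc) -
      EP * B * A *
        (-(A * Sig) / (p * (1 - p)) * σ
          + (Sw / (1 - p) ^ 2 * A + B * (-(A * Sig) / (p * (1 - p)))) * (Ts - Tc)
          + -(-(A * Sig) / (p * (1 - p))) * Tc)
      = EP * Sw * A / (1 - p) ^ 2 * (σ * A + Tc * (1 - Sig - A)) := by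
    rw [hBval]
    field_simp
    ring
  refine ⟨C * fW N σ Tc w p, ?_, fun h => mul_pos hCpos h,
    fun h => mul_neg_of_pos_of_neg hCpos h, fun h => by rw [h, mul_zero]⟩
  have hSsys : Ssys N EP σ Ts Tc w = fun y => EP * PTw N w y * PIw N w y /
      (PIw N w y * σ + PTw N w y * PIw N w y * (Ts - Tc) + (1 - PIw N w y) * Tc) := rfl
  rw [hSsys]
  refine hS.congr_deriv ?_
  symm
  simp only [← hA, ← hB]
  rw [eq_div_iff (pow_ne_zero 2 hD0), hkey, hfval, hC]
  generalize A * σ + B * A * (Ts - Tc) + (1 - A) * Tc = D at hD0 ⊢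
  field_simp
  ring
end

section
/- Let N ≥ 2 be an integer and let g : [0,1] → [0,1] be continuous and nonincreasing. Then there exists a unique τ ∈ [0,1] satisfying the fixed-point equation τ = g(1 − (1 − τ)^{N−1}). -/
/-- Fixed-point equation for the attempt probability: if `g : [0,1] → [0,1]` is continuous
and nonincreasing, then there is a unique `τ ∈ [0,1]` with
`τ = g (1 - (1 - τ)^(N-1))`. -/
theorem fixed_point_exists_unique (N : ℕ) (hN : 2 ≤ N) (g : ℝ → ℝ)
    (hcont : ContinuousOn g (Set.Icc 0 1))
    (hanti : AntitoneOn g (Set.Icc 0 1))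
    (hmaps : Set.MapsTo g (Set.Icc 0 1) (Set.Icc 0 1)) :
    ∃! τ : ℝ, τ ∈ Set.Icc (0 : ℝ) 1 ∧ τ = g (1 - (1 - τ) ^ (N - 1)) := by
  set φ : ℝ → ℝ := fun τ => 1 - (1 - τ) ^ (N - 1) with hφ
  have hφmem : Set.MapsTo φ (Set.Icc (0:ℝ) 1) (Set.Icc (0:ℝ) 1) := by
    intro τ hτ
    obtain ⟨h0, h1⟩ := hτ
    have hp1 : (1 - τ) ^ (N - 1) ≤ 1 := pow_le_one₀ (by linarith) (by linarith)
    have hp0 : (0:ℝ) ≤ (1 - τ) ^ (N - 1) := pow_nonneg (by linarith) _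
    constructor <;> simp only [hφ] <;> linarith
  have hφmono : ∀ a ∈ Set.Icc (0:ℝ) 1, ∀ b ∈ Set.Icc (0:ℝ) 1, a ≤ b → φ a ≤ φ b := by
    intro a ha b hb hab
    have : (1 - b) ^ (N - 1) ≤ (1 - a) ^ (N - 1) :=
      pow_le_pow_left₀ (by linarith [hb.2]) (by linarith) _
    simp only [hφ]; linarith
  set F : ℝ → ℝ := fun τ => g (φ τ) with hF
  have hφcont : ContinuousOn φ (Set.Icc (0:ℝ) 1) := by
    apply Continuous.continuousOn; continuity
  have hFcont : ContinuousOn F (Set.Icc 0 1) := hcont.comp hφcont hφmem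
  have hFanti : ∀ a ∈ Set.Icc (0:ℝ) 1, ∀ b ∈ Set.Icc (0:ℝ) 1, a ≤ b → F b ≤ F a := by
    intro a ha b hb hab
    exact hanti (hφmem ha) (hφmem hb) (hφmono a ha b hb hab)
  set h : ℝ → ℝ := fun τ => τ - F τ with hh
  have hhcont : ContinuousOn h (Set.Icc 0 1) := continuousOn_id.sub hFcont
  have hmem0 : (0:ℝ) ∈ Set.Icc (0:ℝ) 1 := by norm_num
  have hmem1 : (1:ℝ) ∈ Set.Icc (0:ℝ) 1 := by norm_num
  have hF0 : F 0 ∈ Set.Icc (0:ℝ) 1 := hmaps (hφmem hmem0)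
  have hF1 : F 1 ∈ Set.Icc (0:ℝ) 1 := hmaps (hφmem hmem1)
  have h0le : h 0 ≤ 0 := by simp only [hh]; linarith [hF0.1]
  have h1ge : 0 ≤ h 1 := by simp only [hh]; linarith [hF1.2]
  have := intermediate_value_Icc (by norm_num : (0:ℝ) ≤ 1) hhcont
  obtain ⟨τ, hτmem, hτeq⟩ := this ⟨h0le, h1ge⟩
  refine ⟨τ, ⟨hτmem, ?_⟩, ?_⟩
  · have : τ - F τ = 0 := hτeq
    simp only [hF, hφ] at this ⊢
    linarith
  · rintro σ ⟨hσmem, hσeq⟩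
    have hτfix : τ = F τ := by
      have : τ - F τ = 0 := hτeq
      linarith
    have hσfix : σ = F σ := hσeq
    by_contra hne
    rcases lt_or_gt_of_ne hne with hlt | hgt
    · have := hFanti σ hσmem τ hτmem (le_of_lt hlt)
      linarith
    · have := hFanti τ hτmem σ hσmem (le_of_lt hgt)
      linarith
end

section
/- Let q and q' be reset distributions such that τ̂_c(q) < τ̂_c(q') for every c ∈ [0,1). Then the fixed-point attempt probabilities satisfy τ̂(q) < τ̂(q'). -/
open Finset

/-- `α_j(c) = (1-c) ∑_{i=j}^m 2^i c^{i-j} + 2^m c^{m-j}`. -/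
noncomputable def alphaB (m j : ℕ) (c : ℝ) : ℝ :=
  (1 - c) * ∑ i ∈ Finset.Icc j m, (2 : ℝ) ^ i * c ^ (i - j) + (2 : ℝ) ^ m * c ^ (m - j)

/-- `κ_0 = 2 / CW_min`. -/
noncomputable def kappa0 (CWmin : ℕ) : ℝ := 2 / (CWmin : ℝ)

/-- A reset distribution `q = (q_0, …, q_m)`. -/
def IsResetDist (m : ℕ) (q : Fin (m + 1) → ℝ) : Prop :=
  (∀ j, 0 ≤ q j) ∧ (∑ j, q j) = 1

/-- Conditional attempt probability `τ̂_c(q) = κ_0 / ∑_j q_j α_j(c)`. -/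
noncomputable def tauHatC (m CWmin : ℕ) (q : Fin (m + 1) → ℝ) (c : ℝ) : ℝ :=
  kappa0 CWmin / ∑ j : Fin (m + 1), q j * alphaB m (j : ℕ) c

/-- RandomReset(j; p₀) conditional attempt probability
`τ_c(j;p₀) = κ_0 / (p₀ α_j(c) + ((1-p₀)/(m-j)) ∑_{i=j+1}^m α_i(c))`. -/
noncomputable def tauRRC (m CWmin : ℕ) (j : ℕ) (p0 c : ℝ) : ℝ :=
  kappa0 CWmin /
    (p0 * alphaB m j c + ((1 - p0) / ((m : ℝ) - (j : ℝ))) * ∑ i ∈ Finset.Icc (j + 1) m, alphaB m i c)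

/-- `τ ∈ [0,1]` is the fixed-point attempt probability `τ̂(q)` of the reset distribution `q`
for `N` nodes: `τ = τ̂_{1-(1-τ)^(N-1)}(q)`. -/
def IsFixedPointQ (m CWmin N : ℕ) (q : Fin (m + 1) → ℝ) (τ : ℝ) : Prop :=
  τ ∈ Set.Icc (0 : ℝ) 1 ∧ τ = tauHatC m CWmin q (1 - (1 - τ) ^ (N - 1))

/-- `τ ∈ [0,1]` is the fixed-point attempt probability `τ(j;p₀)` of the RandomReset(j;p₀)
policy for `N` nodes: `τ = τ_{1-(1-τ)^(N-1)}(j;p₀)`. -/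
def IsFixedPointRR (m CWmin N : ℕ) (j : ℕ) (p0 τ : ℝ) : Prop :=
  τ ∈ Set.Icc (0 : ℝ) 1 ∧ τ = tauRRC m CWmin j p0 (1 - (1 - τ) ^ (N - 1))

/-! ### Auxiliary lemmas -/

/-- key inequality: `n u^(n-1) (1-u) ≤ 1 - u^n` for `u ∈ [0,1]`. -/
lemma aux_geom (n : ℕ) {u : ℝ} (h0 : 0 ≤ u) (h1 : u ≤ 1) :
    (n : ℝ) * u ^ (n - 1) * (1 - u) ≤ 1 - u ^ n := by
  have key : (1 - u) * ∑ i ∈ range n, u ^ i = 1 - u ^ n := by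
    have h := geom_sum_mul u n
    nlinarith [h]
  have hsum : (n : ℝ) * u ^ (n - 1) ≤ ∑ i ∈ range n, u ^ i := by
    calc (n : ℝ) * u ^ (n - 1) = ∑ _i ∈ range n, u ^ (n - 1) := by
          rw [Finset.sum_const, card_range, nsmul_eq_mul]
      _ ≤ ∑ i ∈ range n, u ^ i := by
          refine Finset.sum_le_sum fun i hi => ?_
          exact pow_le_pow_of_le_one h0 h1 (by have := Finset.mem_range.mp hi; omega)
  nlinarith [hsum, key]

lemma aux_L2 (n : ℕ) (hn : 1 ≤ n) :
    StrictMonoOn (fun t : ℝ => t * (1 + (1 - t) ^ n)) (Set.Icc 0 1) := by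
  apply strictMonoOn_of_deriv_pos (convex_Icc 0 1)
  · exact Continuous.continuousOn (by continuity)
  · intro x hx
    rw [interior_Icc, Set.mem_Ioo] at hx
    have hd : HasDerivAt (fun t : ℝ => t * (1 + (1 - t) ^ n))
        (1 * (1 + (1 - x) ^ n) + x * ((n : ℝ) * (1 - x) ^ (n - 1) * (0 - 1))) x := by
      exact (hasDerivAt_id x).mul
        ((((hasDerivAt_const x (1:ℝ)).sub (hasDerivAt_id x)).pow n).const_add 1)
    rw [hd.deriv]
    set u := 1 - x with hu
    have hu0 : 0 < u := by simp [hu]; linarith [hx.2]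
    have hu1 : u ≤ 1 := by simp [hu]; linarith [hx.1]
    have hkey := aux_geom n hu0.le hu1
    have hup : 0 < u ^ n := pow_pos hu0 n
    have hx' : x = 1 - u := by rw [hu]; ring
    nlinarith [hkey, hup]

lemma aux_L3 (n : ℕ) (hn : 1 ≤ n) :
    MonotoneOn (fun t : ℝ => t * (1 - (1 - t) ^ n) * (1 + 2 * (1 - t) ^ n)) (Set.Icc 0 1) := by
  apply monotoneOn_of_deriv_nonneg (convex_Icc 0 1)
  · exact Continuous.continuousOn (by continuity)
  · apply Differentiable.differentiableOn
    fun_prop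
  · intro x hx
    rw [interior_Icc, Set.mem_Ioo] at hx
    have h1 : HasDerivAt (fun t : ℝ => (1 - t) ^ n)
        ((n : ℝ) * (1 - x) ^ (n - 1) * (0 - 1)) x :=
      (((hasDerivAt_const x (1:ℝ)).sub (hasDerivAt_id x)).pow n)
    have hd : HasDerivAt (fun t : ℝ => t * (1 - (1 - t) ^ n) * (1 + 2 * (1 - t) ^ n))
        ((1 * (1 - (1 - x) ^ n) + x * (0 - ((n : ℝ) * (1 - x) ^ (n - 1) * (0 - 1)))) *
            (1 + 2 * (1 - x) ^ n)
          + x * (1 - (1 - x) ^ n) * (2 * ((n : ℝ) * (1 - x) ^ (n - 1) * (0 - 1)))) x := by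
      exact (((hasDerivAt_id x).mul ((hasDerivAt_const x (1:ℝ)).sub h1)).mul
        ((h1.const_mul 2).const_add 1))
    rw [hd.deriv]
    set u := 1 - x with hu
    have hu0 : 0 ≤ u := by simp [hu]; linarith [hx.2]
    have hu1 : u ≤ 1 := by simp [hu]; linarith [hx.1]
    have hkey := aux_geom n hu0 hu1
    have hw0 : 0 ≤ u ^ n := pow_nonneg hu0 n
    have hw1 : u ^ n ≤ 1 := pow_le_one₀ hu0 hu1
    have hA0 : 0 ≤ (n : ℝ) * u ^ (n - 1) * (1 - u) := by
      apply mul_nonneg (mul_nonneg (by positivity) (pow_nonneg hu0 _)); linarith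
    have hx' : x = 1 - u := by rw [hu]; ring
    nlinarith [hkey, hw0, hw1, hA0, mul_nonneg hw0 (sub_nonneg.mpr hw1),
      mul_nonneg hA0 hw0]

lemma aux_helper (M : ℕ) (c : ℝ) :
    (1 - c) * ∑ d ∈ range (M + 1), (2 * c) ^ d
      = 1 + (∑ d ∈ range M, 2 ^ d * c ^ (d + 1)) - 2 ^ M * c ^ (M + 1) := by
  induction M with
  | zero => simp
  | succ M ih =>
    rw [Finset.sum_range_succ, Finset.sum_range_succ (f := fun d => (2:ℝ)^d * c^(d+1)), mul_add, ih]
    ring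

lemma alphaB_eq (m j : ℕ) (hj : j ≤ m) (c : ℝ) :
    alphaB m j c
      = 2 ^ j + (∑ k ∈ Icc (j + 1) m, (2:ℝ) ^ (k - 1) * c ^ (k - j))
        + 2 ^ m * c ^ (m - j) * (1 - c) := by
  unfold alphaB
  set M := m - j with hM
  have hm : m = j + M := by omega
  have e1 : ∑ i ∈ Icc j m, (2 : ℝ) ^ i * c ^ (i - j)
      = 2 ^ j * ∑ d ∈ range (M + 1), (2 * c) ^ d := by
    rw [← Finset.Ico_add_one_right_eq_Icc, Finset.sum_Ico_eq_sum_range, Finset.mul_sum]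
    have : m + 1 - j = M + 1 := by omega
    rw [this]
    refine Finset.sum_congr rfl fun d hd => ?_
    have : j + d - j = d := by omega
    rw [this, mul_pow, pow_add]
    ring
  have e2 : ∑ k ∈ Icc (j + 1) m, (2:ℝ) ^ (k - 1) * c ^ (k - j)
      = 2 ^ j * ∑ d ∈ range M, 2 ^ d * c ^ (d + 1) := by
    rw [← Finset.Ico_add_one_right_eq_Icc, Finset.sum_Ico_eq_sum_range, Finset.mul_sum]
    have : m + 1 - (j + 1) = M := by omega
    rw [this]
    refine Finset.sum_congr rfl fun d hd => ?_
    have h1 : j + 1 + d - 1 = j + d := by omega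
    have h2 : j + 1 + d - j = d + 1 := by omega
    rw [h1, h2, pow_add]
    ring
  rw [e1, ← mul_assoc, mul_comm (1 - c) ((2:ℝ)^j), mul_assoc, aux_helper, e2]
  have : (2:ℝ) ^ j * (2:ℝ) ^ M = 2 ^ m := by rw [← pow_add, hm]
  linear_combination (-(c ^ M * c)) * this

lemma G_decomp (m n j : ℕ) (hjm : j < m) (t : ℝ) :
    t * alphaB m j (1 - (1 - t) ^ n)
      = 2 ^ j * t
        + (∑ k ∈ Icc (j + 1) (m - 1), (2:ℝ) ^ (k - 1) * (t * (1 - (1 - t) ^ n) ^ (k - j)))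
        + 2 ^ (m - 1) * ((1 - (1 - t) ^ n) ^ (m - j - 1)
            * (t * (1 - (1 - t) ^ n) * (1 + 2 * (1 - t) ^ n))) := by
  set c : ℝ := 1 - (1 - t) ^ n with hc
  rw [alphaB_eq m j hjm.le]
  have hm1 : m - 1 + 1 = m := by omega
  have hsum : ∑ k ∈ Icc (j + 1) m, (2:ℝ) ^ (k - 1) * c ^ (k - j)
      = (∑ k ∈ Icc (j + 1) (m - 1), (2:ℝ) ^ (k - 1) * c ^ (k - j))
        + 2 ^ (m - 1) * c ^ (m - j) := by
    conv_lhs => rw [← hm1]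
    rw [Finset.sum_Icc_succ_top (by omega : j + 1 ≤ m - 1 + 1), hm1]
  have hpow : c ^ (m - j) = c ^ (m - j - 1) * c := by
    rw [← pow_succ]; congr 1; omega
  have hpow2 : (2:ℝ) ^ m = 2 ^ (m - 1) * 2 := by
    rw [← pow_succ]; congr 1; omega
  have h1c : (1 - t) ^ n = 1 - c := by rw [hc]; ring
  have hts : t * (∑ k ∈ Icc (j + 1) (m - 1), (2:ℝ) ^ (k - 1) * c ^ (k - j))
      = ∑ k ∈ Icc (j + 1) (m - 1), (2:ℝ) ^ (k - 1) * (t * c ^ (k - j)) := by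
    rw [Finset.mul_sum]; exact Finset.sum_congr rfl fun k _ => by ring
  rw [hsum, hpow, hpow2, h1c]
  linear_combination hts

lemma G_strict (m n j : ℕ) (hn : 1 ≤ n) (hm : 1 ≤ m) (hj : j ≤ m) :
    StrictMonoOn (fun t : ℝ => t * alphaB m j (1 - (1 - t) ^ n)) (Set.Icc 0 1) := by
  intro a ha b hb hab
  obtain ⟨ha0, ha1⟩ := Set.mem_Icc.mp ha
  obtain ⟨hb0, hb1⟩ := Set.mem_Icc.mp hb
  have hua0 : (0:ℝ) ≤ (1 - a) ^ n := pow_nonneg (by linarith) n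
  have hua1 : (1 - a) ^ n ≤ 1 := pow_le_one₀ (by linarith) (by linarith)
  have hub0 : (0:ℝ) ≤ (1 - b) ^ n := pow_nonneg (by linarith) n
  have hub1 : (1 - b) ^ n ≤ 1 := pow_le_one₀ (by linarith) (by linarith)
  have hca0 : (0:ℝ) ≤ 1 - (1 - a) ^ n := by linarith
  have hcb0 : (0:ℝ) ≤ 1 - (1 - b) ^ n := by linarith
  have hcab : 1 - (1 - a) ^ n ≤ 1 - (1 - b) ^ n := by
    have : (1 - b) ^ n ≤ (1 - a) ^ n :=
      pow_le_pow_left₀ (by linarith) (by linarith) n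
    linarith
  rcases eq_or_lt_of_le hj with heq | hjm
  · -- j = m
    subst heq
    have hae : ∀ t : ℝ, t * alphaB j j (1 - (1 - t) ^ n)
        = 2 ^ j * (t * (1 + (1 - t) ^ n)) := by
      intro t
      rw [alphaB_eq j j le_rfl]
      rw [Finset.Icc_eq_empty (by omega : ¬ j + 1 ≤ j)]
      simp [Nat.sub_self]
      ring
    simp only [hae]
    exact mul_lt_mul_of_pos_left (aux_L2 n hn ha hb hab) (by positivity)
  · -- j < m
    simp only
    rw [G_decomp m n j hjm a, G_decomp m n j hjm b]
    have h1 : (2:ℝ) ^ j * a < 2 ^ j * b := mul_lt_mul_of_pos_left hab (by positivity)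
    have h2 : ∑ k ∈ Icc (j + 1) (m - 1), (2:ℝ) ^ (k - 1) * (a * (1 - (1 - a) ^ n) ^ (k - j))
        ≤ ∑ k ∈ Icc (j + 1) (m - 1), (2:ℝ) ^ (k - 1) * (b * (1 - (1 - b) ^ n) ^ (k - j)) := by
      refine Finset.sum_le_sum fun k _ => ?_
      refine mul_le_mul_of_nonneg_left ?_ (by positivity)
      exact mul_le_mul hab.le (pow_le_pow_left₀ hca0 hcab _) (pow_nonneg hca0 _) hb0
    have hL3 := aux_L3 n hn ha hb hab.le
    simp only at hL3
    have hA0 : (0:ℝ) ≤ a * (1 - (1 - a) ^ n) * (1 + 2 * (1 - a) ^ n) := by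
      apply mul_nonneg (mul_nonneg ha0 hca0); positivity
    have h3 : (2:ℝ) ^ (m - 1) * ((1 - (1 - a) ^ n) ^ (m - j - 1)
          * (a * (1 - (1 - a) ^ n) * (1 + 2 * (1 - a) ^ n)))
        ≤ 2 ^ (m - 1) * ((1 - (1 - b) ^ n) ^ (m - j - 1)
          * (b * (1 - (1 - b) ^ n) * (1 + 2 * (1 - b) ^ n))) := by
      refine mul_le_mul_of_nonneg_left ?_ (by positivity)
      exact mul_le_mul (pow_le_pow_left₀ hca0 hcab _) hL3 hA0 (pow_nonneg hcb0 _)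
    exact add_lt_add_of_lt_of_le (add_lt_add_of_lt_of_le h1 h2) h3

lemma psi_strict (m n : ℕ) (hn : 1 ≤ n) (hm : 1 ≤ m) (q : Fin (m + 1) → ℝ)
    (hq0 : ∀ j, 0 ≤ q j) (hq1 : (∑ j, q j) = 1) :
    StrictMonoOn
      (fun t : ℝ => t * ∑ j : Fin (m + 1), q j * alphaB m (j : ℕ) (1 - (1 - t) ^ n))
      (Set.Icc 0 1) := by
  intro a ha b hb hab
  have hrw : ∀ t : ℝ, t * ∑ j : Fin (m + 1), q j * alphaB m (j : ℕ) (1 - (1 - t) ^ n)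
      = ∑ j : Fin (m + 1), q j * (t * alphaB m (j : ℕ) (1 - (1 - t) ^ n)) := by
    intro t; rw [Finset.mul_sum]; exact Finset.sum_congr rfl fun j _ => by ring
  simp only [hrw]
  obtain ⟨j0, hj0⟩ : ∃ j, 0 < q j := by
    by_contra h
    push_neg at h
    have hz : ∀ j, q j = 0 := fun j => le_antisymm (h j) (hq0 j)
    simp [hz] at hq1
  apply Finset.sum_lt_sum
  · intro j _
    exact mul_le_mul_of_nonneg_left ((G_strict m n j hn hm j.is_le ha hb hab).le) (hq0 j)
  · exact ⟨j0, Finset.mem_univ _,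
      mul_lt_mul_of_pos_left (G_strict m n j0 hn hm j0.is_le ha hb hab) hj0⟩

lemma alphaB_ge_one (m j : ℕ) (hj : j ≤ m) {c : ℝ} (hc0 : 0 ≤ c) (hc1 : c ≤ 1) :
    1 ≤ alphaB m j c := by
  rw [alphaB_eq m j hj]
  have h1 : (1:ℝ) ≤ 2 ^ j := one_le_pow₀ one_le_two
  have h2 : (0:ℝ) ≤ ∑ k ∈ Icc (j + 1) m, (2:ℝ) ^ (k - 1) * c ^ (k - j) :=
    Finset.sum_nonneg fun k _ => by positivity
  have h3 : (0:ℝ) ≤ 2 ^ m * c ^ (m - j) * (1 - c) := by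
    apply mul_nonneg (by positivity); linarith
  linarith

lemma alphaB_one_ge_two (m j : ℕ) (hm : 1 ≤ m) (hj : j ≤ m) :
    (2:ℝ) ≤ alphaB m j 1 := by
  rw [alphaB_eq m j hj]
  have h2 : (0:ℝ) ≤ ∑ k ∈ Icc (j + 1) m, (2:ℝ) ^ (k - 1) * (1:ℝ) ^ (k - j) :=
    Finset.sum_nonneg fun k _ => by positivity
  rcases Nat.eq_zero_or_pos j with rfl | hj1
  · have hmem : 1 ∈ Icc (0 + 1) m := by simp; omega
    have := Finset.single_le_sum (f := fun k => (2:ℝ) ^ (k - 1) * (1:ℝ) ^ (k - 0))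
      (fun k _ => by positivity) hmem
    simp at this ⊢
    linarith
  · have h2j : (2:ℝ) ≤ 2 ^ j := by
      calc (2:ℝ) = 2 ^ 1 := (pow_one 2).symm
      _ ≤ 2 ^ j := pow_le_pow_right₀ one_le_two hj1
    have h2' : (0:ℝ) ≤ ∑ k ∈ Icc (j + 1) m, (2:ℝ) ^ (k - 1) :=
      Finset.sum_nonneg fun k _ => by positivity
    simp only [one_pow, mul_one]
    nlinarith [h2', h2j]

/-- If `τ̂_c(q) < τ̂_c(q')` for every `c ∈ [0,1)`, then the fixed-point attempt
probabilities satisfy `τ̂(q) < τ̂(q')`. -/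
theorem fixedPoint_lt_of_tauHatC_lt (m CWmin N : ℕ) (hm : 1 ≤ m) (hCW : 2 ≤ CWmin)
    (hN : 2 ≤ N) (q q' : Fin (m + 1) → ℝ)
    (hq : IsResetDist m q) (hq' : IsResetDist m q')
    (hlt : ∀ c ∈ Set.Ico (0 : ℝ) 1, tauHatC m CWmin q c < tauHatC m CWmin q' c)
    (τ τ' : ℝ) (hτ : IsFixedPointQ m CWmin N q τ) (hτ' : IsFixedPointQ m CWmin N q' τ') :
    τ < τ' := by
  obtain ⟨⟨hτ0, hτ1⟩, hfixτ⟩ := hτ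
  obtain ⟨⟨hτ'0, hτ'1⟩, hfixτ'⟩ := hτ'
  obtain ⟨hq0, hq1⟩ := hq
  obtain ⟨hq'0, hq'1⟩ := hq'
  set n := N - 1 with hndef
  have hn : 1 ≤ n := by omega
  have hCWpos : (0:ℝ) < (CWmin : ℝ) := by exact_mod_cast (by omega : 0 < CWmin)
  have hk0 : 0 < kappa0 CWmin := by unfold kappa0; positivity
  have hk1 : kappa0 CWmin ≤ 1 := by
    unfold kappa0; rw [div_le_one hCWpos]; exact_mod_cast hCW
  have hS1 : ∀ (r : Fin (m + 1) → ℝ), (∀ j, 0 ≤ r j) → (∑ j, r j) = 1 →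
      ∀ c : ℝ, 0 ≤ c → c ≤ 1 → 1 ≤ ∑ j : Fin (m + 1), r j * alphaB m (j : ℕ) c := by
    intro r hr0 hr1 c hc0 hc1
    calc (1:ℝ) = ∑ j, r j := hr1.symm
      _ ≤ ∑ j, r j * alphaB m (j : ℕ) c :=
        Finset.sum_le_sum fun j _ =>
          le_mul_of_one_le_right (hr0 j) (alphaB_ge_one m j j.is_le hc0 hc1)
  have hbounds : ∀ (r : Fin (m + 1) → ℝ), (∀ j, 0 ≤ r j) → (∑ j, r j) = 1 →
      ∀ t : ℝ, 0 ≤ t → t ≤ 1 → t = tauHatC m CWmin r (1 - (1 - t) ^ n) → 0 < t ∧ t < 1 := by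
    intro r hr0 hr1 t ht0 ht1 hfix
    have hu0 : (0:ℝ) ≤ (1 - t) ^ n := pow_nonneg (by linarith) n
    have hu1 : (1 - t) ^ n ≤ 1 := pow_le_one₀ (by linarith) (by linarith)
    have hS := hS1 r hr0 hr1 (1 - (1 - t) ^ n) (by linarith) (by linarith)
    constructor
    · rw [hfix]; unfold tauHatC; exact div_pos hk0 (by linarith)
    · rcases lt_or_eq_of_le ht1 with h | h
      · exact h
      · exfalso
        subst h
        have hone : (1:ℝ) - ((1:ℝ) - 1) ^ n = 1 := by
          simp [zero_pow (show n ≠ 0 by omega)]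
        have hS2 : (2:ℝ) ≤ ∑ j : Fin (m + 1), r j * alphaB m (j : ℕ) (1 - ((1:ℝ) - 1) ^ n) := by
          rw [hone]
          calc (2:ℝ) = ∑ j : Fin (m + 1), r j * 2 := by rw [← Finset.sum_mul, hr1, one_mul]
            _ ≤ _ := Finset.sum_le_sum fun j _ =>
                mul_le_mul_of_nonneg_left (alphaB_one_ge_two m j hm j.is_le) (hr0 j)
        have hle : tauHatC m CWmin r (1 - ((1:ℝ) - 1) ^ n) ≤ 1 / 2 := by
          unfold tauHatC
          exact div_le_div₀ zero_le_one hk1 two_pos hS2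
        rw [← hfix] at hle
        linarith
  obtain ⟨hτpos, hτlt1⟩ := hbounds q hq0 hq1 τ hτ0 hτ1 hfixτ
  obtain ⟨hτ'pos, hτ'lt1⟩ := hbounds q' hq'0 hq'1 τ' hτ'0 hτ'1 hfixτ'
  have hupos : (0:ℝ) < (1 - τ) ^ n := pow_pos (by linarith) n
  have hu1 : (1 - τ) ^ n ≤ 1 := pow_le_one₀ (by linarith) (by linarith)
  have hu'0 : (0:ℝ) ≤ (1 - τ') ^ n := pow_nonneg (by linarith) n
  have hu'1 : (1 - τ') ^ n ≤ 1 := pow_le_one₀ (by linarith) (by linarith)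
  have hc0 : (0:ℝ) ≤ 1 - (1 - τ) ^ n := by linarith
  have hc1 : 1 - (1 - τ) ^ n < 1 := by linarith
  have hltc := hlt (1 - (1 - τ) ^ n) ⟨hc0, hc1⟩
  have hSq1 : 1 ≤ ∑ j : Fin (m + 1), q j * alphaB m (j : ℕ) (1 - (1 - τ) ^ n) :=
    hS1 q hq0 hq1 _ hc0 hc1.le
  have hSq'1 : 1 ≤ ∑ j : Fin (m + 1), q' j * alphaB m (j : ℕ) (1 - (1 - τ) ^ n) :=
    hS1 q' hq'0 hq'1 _ hc0 hc1.le
  have hSS : (∑ j : Fin (m + 1), q' j * alphaB m (j : ℕ) (1 - (1 - τ) ^ n))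
      < ∑ j : Fin (m + 1), q j * alphaB m (j : ℕ) (1 - (1 - τ) ^ n) := by
    unfold tauHatC at hltc
    rw [div_lt_div_iff₀ (by linarith) (by linarith)] at hltc
    exact lt_of_mul_lt_mul_left hltc hk0.le
  have h1 : τ * ∑ j : Fin (m + 1), q j * alphaB m (j : ℕ) (1 - (1 - τ) ^ n)
      = kappa0 CWmin := by
    have hfix2 : τ = kappa0 CWmin / ∑ j : Fin (m + 1), q j * alphaB m (j : ℕ) (1 - (1 - τ) ^ n) :=
      hfixτ
    exact (eq_div_iff (by linarith)).mp hfix2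
  have h1' : τ' * ∑ j : Fin (m + 1), q' j * alphaB m (j : ℕ) (1 - (1 - τ') ^ n)
      = kappa0 CWmin := by
    have hS'τ' : 1 ≤ ∑ j : Fin (m + 1), q' j * alphaB m (j : ℕ) (1 - (1 - τ') ^ n) :=
      hS1 q' hq'0 hq'1 _ (by linarith) (by linarith)
    have hfix2 : τ' = kappa0 CWmin / ∑ j : Fin (m + 1), q' j * alphaB m (j : ℕ) (1 - (1 - τ') ^ n) :=
      hfixτ'
    exact (eq_div_iff (by linarith)).mp hfix2
  have hmono := psi_strict m n hn hm q' hq'0 hq'1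
  have hfin : (fun t : ℝ => t * ∑ j : Fin (m + 1), q' j * alphaB m (j : ℕ) (1 - (1 - t) ^ n)) τ
      < (fun t : ℝ => t * ∑ j : Fin (m + 1), q' j * alphaB m (j : ℕ) (1 - (1 - t) ^ n)) τ' := by
    simp only
    rw [h1']
    calc τ * ∑ j : Fin (m + 1), q' j * alphaB m (j : ℕ) (1 - (1 - τ) ^ n)
        < τ * ∑ j : Fin (m + 1), q j * alphaB m (j : ℕ) (1 - (1 - τ) ^ n) :=
          mul_lt_mul_of_pos_left hSS hτpos
      _ = kappa0 CWmin := h1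
  exact (hmono.lt_iff_lt (Set.mem_Icc.mpr ⟨hτ0, hτ1⟩) (Set.mem_Icc.mpr ⟨hτ'0, hτ'1⟩)).mp hfin
end

section
/- Fix j ∈ {0,…,m−1} and c ∈ [0,1). Then the map p_0 ↦ τ_c(j;p_0) is strictly increasing on [0,1]. -/
open Finset

lemma alphaB_top (m : ℕ) (c : ℝ) : alphaB m m c = 2 ^ m * (2 - c) := by
  unfold alphaB
  rw [Finset.Icc_self, Finset.sum_singleton]
  simp [Nat.sub_self]
  ring

lemma alphaB_rec (m j : ℕ) (c : ℝ) (h : j < m) :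
    alphaB m j c = (1 - c) * 2 ^ j + c * alphaB m (j + 1) c := by
  unfold alphaB
  have hins : Finset.Icc j m = insert j (Finset.Icc (j + 1) m) := by
    ext x; simp only [Finset.mem_Icc, Finset.mem_insert]; omega
  rw [hins, Finset.sum_insert (by simp)]
  have hsum : ∑ i ∈ Finset.Icc (j + 1) m, (2 : ℝ) ^ i * c ^ (i - j)
      = c * ∑ i ∈ Finset.Icc (j + 1) m, (2 : ℝ) ^ i * c ^ (i - (j + 1)) := by
    rw [Finset.mul_sum]
    refine Finset.sum_congr rfl fun i hi => ?_
    have hij : j + 1 ≤ i := (Finset.mem_Icc.mp hi).1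
    have : i - j = (i - (j + 1)) + 1 := by omega
    rw [this, pow_succ]; ring
  have hmj : m - j = (m - (j + 1)) + 1 := by omega
  rw [hsum, hmj, pow_succ]
  simp [Nat.sub_self]
  ring

lemma alphaB_ge (m : ℕ) (c : ℝ) (hc0 : 0 ≤ c) (hc1 : c ≤ 1) :
    ∀ k l, l + k = m → (2 : ℝ) ^ l ≤ alphaB m l c := by
  intro k
  induction k with
  | zero =>
    intro l hl
    have : l = m := by omega
    subst this
    rw [alphaB_top]
    have h2 : (0 : ℝ) < 2 ^ l := by positivity
    nlinarith
  | succ k ih =>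
    intro l hl
    have h' : l < m := by omega
    rw [alphaB_rec m l c h']
    have hih := ih (l + 1) (by omega)
    have h2 : (0 : ℝ) < 2 ^ l := by positivity
    have h3 : (2 : ℝ) ^ (l + 1) = 2 * 2 ^ l := by rw [pow_succ]; ring
    nlinarith

lemma alphaB_pos (m l : ℕ) (c : ℝ) (hc0 : 0 ≤ c) (hc1 : c ≤ 1) (h : l ≤ m) :
    0 < alphaB m l c := by
  have := alphaB_ge m c hc0 hc1 (m - l) l (by omega)
  have : (0 : ℝ) < 2 ^ l := by positivity
  linarith [alphaB_ge m c hc0 hc1 (m - l) l (by omega)]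

lemma alphaB_step (m l : ℕ) (c : ℝ) (hc0 : 0 ≤ c) (hc1 : c < 1) (h : l < m) :
    alphaB m l c < alphaB m (l + 1) c := by
  rw [alphaB_rec m l c h]
  have hge := alphaB_ge m c hc0 (le_of_lt hc1) (m - (l + 1)) (l + 1) (by omega)
  have h2 : (0 : ℝ) < 2 ^ l := by positivity
  have h3 : (2 : ℝ) ^ (l + 1) = 2 * 2 ^ l := by rw [pow_succ]; ring
  nlinarith

lemma alphaB_lt_of_lt (m j : ℕ) (c : ℝ) (hc0 : 0 ≤ c) (hc1 : c < 1) :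
    ∀ i, j < i → i ≤ m → alphaB m j c < alphaB m i c := by
  intro i
  induction i with
  | zero => omega
  | succ i ih =>
    intro hji him
    rcases Nat.lt_or_ge j i with h | h
    · exact (ih h (by omega)).trans (alphaB_step m i c hc0 hc1 (by omega))
    · have : j = i := by omega
      subst this
      exact alphaB_step m j c hc0 hc1 (by omega)

/-- For fixed `j ∈ {0,…,m-1}` and `c ∈ [0,1)`, the map `p₀ ↦ τ_c(j;p₀)` is strictly
increasing on `[0,1]`. -/
theorem tauRRC_strictMono_in_p0 (m CWmin : ℕ) (hm : 1 ≤ m) (hCW : 2 ≤ CWmin)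
    (j : ℕ) (hj : j < m) (c : ℝ) (hc : c ∈ Set.Ico (0 : ℝ) 1) :
    StrictMonoOn (fun p0 => tauRRC m CWmin j p0 c) (Set.Icc 0 1) := by
  obtain ⟨hc0, hc1⟩ := hc
  intro p hp q hq hpq
  simp only [Set.mem_Icc] at hp hq
  obtain ⟨hp0, hp1⟩ := hp
  obtain ⟨hq0, hq1⟩ := hq
  set α := alphaB m j c with hα
  set S := ∑ i ∈ Finset.Icc (j + 1) m, alphaB m i c with hS
  set r : ℝ := (m : ℝ) - (j : ℝ) with hr
  have hrpos : 0 < r := by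
    rw [hr]; have : (j : ℝ) < (m : ℝ) := by exact_mod_cast hj
    linarith
  have hαpos : 0 < α := alphaB_pos m j c hc0 (le_of_lt hc1) (le_of_lt hj)
  -- S > r * α
  have hSgt : r * α < S := by
    have hne : (Finset.Icc (j + 1) m).Nonempty := by
      rw [Finset.nonempty_Icc]; omega
    have hlt : ∑ i ∈ Finset.Icc (j + 1) m, α < S := by
      rw [hS]
      refine Finset.sum_lt_sum_of_nonempty hne fun i hi => ?_
      obtain ⟨h1, h2⟩ := Finset.mem_Icc.mp hi
      exact alphaB_lt_of_lt m j c hc0 hc1 i (by omega) h2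
    have hcard : ∑ i ∈ Finset.Icc (j + 1) m, α = r * α := by
      rw [Finset.sum_const, Nat.card_Icc]
      have : ((m + 1 - (j + 1) : ℕ) : ℝ) = r := by
        rw [hr]
        have : m + 1 - (j + 1) = m - j := by omega
        rw [this]
        rw [Nat.cast_sub (le_of_lt hj)]
      rw [nsmul_eq_mul, this]
    linarith [hcard ▸ hlt]
  have hαS : α < S / r := (lt_div_iff₀ hrpos).2 (by linarith)
  -- the denominators
  set Dp := p * α + ((1 - p) / r) * S with hDp
  set Dq := q * α + ((1 - q) / r) * S with hDq
  clear_value α S r Dp Dq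
  have hdiff : Dp - Dq = (q - p) * (S / r - α) := by
    rw [hDp, hDq]; ring
  have hDqDp : Dq < Dp := by nlinarith [mul_pos (sub_pos.2 hpq) (sub_pos.2 hαS)]
  have hDqpos : 0 < Dq := by
    have h1 : (1 - q) * α ≤ ((1 - q) / r) * S := by
      rw [div_mul_eq_mul_div, le_div_iff₀ hrpos]
      nlinarith
    nlinarith [mul_nonneg hq0 hαpos.le]
  have hκ : 0 < kappa0 CWmin := by
    unfold kappa0
    have : (0 : ℝ) < (CWmin : ℝ) := by
      have : (2 : ℝ) ≤ (CWmin : ℝ) := by exact_mod_cast hCW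
      linarith
    positivity
  show tauRRC m CWmin j p c < tauRRC m CWmin j q c
  unfold tauRRC
  rw [← hα, ← hS, ← hr, ← hDp, ← hDq]
  exact div_lt_div_of_pos_left hκ hDqpos hDqDp
end

section
/- Fix j ∈ {0,…,m−1} and N ≥ 2. Then the fixed-point attempt probability p_0 ↦ τ(j;p_0) is continuous and strictly increasing on [0,1]. -/
open Finset

namespace BEBaux

lemma revInd (m : ℕ) (P : ℕ → Prop) (base : P m) (step : ∀ j, j < m → P (j+1) → P j) :
    ∀ j, j ≤ m → P j := by
  have H : ∀ k j, j + k = m → P j := by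
    intro k
    induction k with
    | zero => intro j h; have : j = m := by omega
              subst this; exact base
    | succ k ih => intro j h; exact step j (by omega) (ih (j+1) (by omega))
  intro j hj; exact H (m - j) j (by omega)

lemma alphaB_top (m : ℕ) (c : ℝ) : alphaB m m c = 2 ^ m * (2 - c) := by
  unfold alphaB
  rw [Finset.Icc_self, Finset.sum_singleton]
  simp
  ring

lemma alphaB_rec {m j : ℕ} (h : j < m) (c : ℝ) :
    alphaB m j c = (1 - c) * 2 ^ j + c * alphaB m (j+1) c := by
  unfold alphaB
  have hins : Finset.Icc j m = insert j (Finset.Icc (j+1) m) := by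
    ext i; simp [Finset.mem_Icc]; omega
  rw [hins, Finset.sum_insert (by simp)]
  have h1 : ∀ i ∈ Finset.Icc (j+1) m, (2:ℝ)^i * c^(i-j) = c * ((2:ℝ)^i * c^(i-(j+1))) := by
    intro i hi
    simp only [Finset.mem_Icc] at hi
    have hij : i - j = (i - (j+1)) + 1 := by omega
    rw [hij, pow_succ]; ring
  rw [Finset.sum_congr rfl h1]
  have h2 : m - j = (m - (j+1)) + 1 := by omega
  rw [h2, pow_succ, Nat.sub_self, pow_zero, ← Finset.mul_sum]
  ring

lemma alphaB_ge {m : ℕ} {c : ℝ} (hc : c ∈ Set.Icc (0:ℝ) 1) :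
    ∀ j, j ≤ m → (2:ℝ)^j ≤ alphaB m j c := by
  obtain ⟨hc0, hc1⟩ := hc
  apply revInd
  · rw [alphaB_top]
    nlinarith [pow_pos (by norm_num : (0:ℝ) < 2) m]
  · intro j hj ih
    rw [alphaB_rec hj]
    have h2 : (2:ℝ)^(j+1) = 2 * 2^j := by ring
    nlinarith [pow_pos (by norm_num : (0:ℝ) < 2) j]

lemma alphaB_mono_succ {m j : ℕ} {c : ℝ} (hc : c ∈ Set.Icc (0:ℝ) 1) (h : j < m) :
    alphaB m j c ≤ alphaB m (j+1) c := by
  have hge := alphaB_ge hc (j+1) h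
  obtain ⟨hc0, hc1⟩ := hc
  rw [alphaB_rec h]
  have h2 : (2:ℝ)^(j+1) = 2 * 2^j := by ring
  nlinarith [pow_pos (by norm_num : (0:ℝ) < 2) j]

lemma alphaB_monoIdx {m : ℕ} {c : ℝ} (hc : c ∈ Set.Icc (0:ℝ) 1) {i1 i2 : ℕ}
    (h12 : i1 ≤ i2) (h2 : i2 ≤ m) : alphaB m i1 c ≤ alphaB m i2 c := by
  induction i2, h12 using Nat.le_induction with
  | base => exact le_refl _
  | succ k hk ih => exact (ih (by omega)).trans (alphaB_mono_succ hc (by omega))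

lemma alphaB_lt {m j i : ℕ} {c : ℝ} (hc : c ∈ Set.Ico (0:ℝ) 1) (h1 : j < i) (h2 : i ≤ m) :
    alphaB m j c < alphaB m i c := by
  obtain ⟨hc0, hc1⟩ := hc
  have hcI : c ∈ Set.Icc (0:ℝ) 1 := ⟨hc0, hc1.le⟩
  have hjm : j < m := by omega
  have hstep : alphaB m j c < alphaB m (j+1) c := by
    have hge := alphaB_ge hcI (j+1) hjm
    rw [alphaB_rec hjm]
    have h2' : (2:ℝ)^(j+1) = 2 * 2^j := by ring
    nlinarith [pow_pos (by norm_num : (0:ℝ) < 2) j]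
  exact hstep.trans_le (alphaB_monoIdx hcI h1 h2)

lemma alphaB_one (m i : ℕ) : alphaB m i 1 = 2 ^ m := by
  unfold alphaB; simp

lemma continuous_alphaB (m i : ℕ) : Continuous (alphaB m i) := by
  unfold alphaB
  fun_prop

lemma alphaB_hasDeriv (m : ℕ) : ∀ j, j ≤ m → ∀ c ∈ Set.Icc (0:ℝ) 1,
    ∃ d, HasDerivAt (alphaB m j) d c ∧ (2:ℝ)^j * (1 - c) ≤ alphaB m j c + c * d := by
  apply revInd
  · intro c hc
    obtain ⟨hc0, hc1⟩ := hc
    refine ⟨-(2^m), ?_, ?_⟩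
    · have hfun : alphaB m m = fun x : ℝ => (2:ℝ)^m * (2 - x) := funext fun x => alphaB_top m x
      rw [hfun]
      have : HasDerivAt (fun x : ℝ => (2:ℝ)^m * (2 - x)) ((2:ℝ)^m * (0 - 1)) c :=
        ((hasDerivAt_const c (2:ℝ)).sub (hasDerivAt_id c)).const_mul _
      convert this using 1; ring
    · rw [alphaB_top]
      nlinarith [pow_pos (by norm_num : (0:ℝ) < 2) m]
  · intro j hj ih c hc
    obtain ⟨d', hd', hb'⟩ := ih c hc
    obtain ⟨hc0, hc1⟩ := hc
    have ha' := alphaB_ge (m := m) ⟨hc0, hc1⟩ (j+1) hj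
    refine ⟨-(2^j) + (alphaB m (j+1) c + c * d'), ?_, ?_⟩
    · have hfun : alphaB m j = fun x : ℝ => (1-x) * 2^j + x * alphaB m (j+1) x :=
        funext fun x => alphaB_rec hj x
      rw [hfun]
      have h1 : HasDerivAt (fun x : ℝ => (1-x) * (2:ℝ)^j) ((0-1) * 2^j) c :=
        ((hasDerivAt_const c (1:ℝ)).sub (hasDerivAt_id c)).mul_const _
      have h2 : HasDerivAt (fun x : ℝ => x * alphaB m (j+1) x)
          (1 * alphaB m (j+1) c + c * d') c := (hasDerivAt_id c).mul hd'
      exact (h1.add h2).congr_deriv (by ring)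
    · rw [alphaB_rec hj]
      have h2' : (2:ℝ)^(j+1) = 2 * 2^j := by ring
      nlinarith [pow_pos (by norm_num : (0:ℝ) < 2) j,
        mul_le_mul_of_nonneg_left hb' hc0, mul_le_mul_of_nonneg_left ha' hc0,
        mul_nonneg hc0 (pow_pos (by norm_num : (0:ℝ) < 2) j).le,
        mul_nonneg (mul_nonneg hc0 hc0) (pow_pos (by norm_num : (0:ℝ) < 2) j).le]

end BEBaux

namespace BEBaux

lemma cfun_mem {N : ℕ} {τ : ℝ} (hτ : τ ∈ Set.Icc (0:ℝ) 1) :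
    1 - (1-τ)^(N-1) ∈ Set.Icc (0:ℝ) 1 := by
  obtain ⟨h0, h1⟩ := hτ
  constructor
  · have : (1-τ)^(N-1) ≤ 1 := pow_le_one₀ (by linarith) (by linarith)
    linarith
  · have : 0 ≤ (1-τ)^(N-1) := pow_nonneg (by linarith) _
    linarith

lemma cfun_lt_one {N : ℕ} {τ : ℝ} (h : τ < 1) : 1 - (1-τ)^(N-1) < 1 := by
  have : 0 < (1-τ)^(N-1) := pow_pos (by linarith) _
  linarith

lemma cfun_hasDeriv (N : ℕ) (τ : ℝ) :
    HasDerivAt (fun t : ℝ => 1 - (1-t)^(N-1)) (((N-1:ℕ):ℝ) * (1-τ)^(N-1-1)) τ := by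
  have h0 : HasDerivAt (fun t : ℝ => 1 - t) (-1) τ := by
    exact ((hasDerivAt_const τ (1:ℝ)).sub (hasDerivAt_id' τ)).congr_deriv (by ring)
  have hp := h0.pow (N-1)
  have := (hasDerivAt_const τ (1:ℝ)).sub hp
  exact this.congr_deriv (by ring)

lemma tau_mul_deriv_le {N : ℕ} (hN : 2 ≤ N) {τ : ℝ} (hτ : τ ∈ Set.Icc (0:ℝ) 1) :
    τ * (((N-1:ℕ):ℝ) * (1-τ)^(N-1-1)) ≤ 1 - (1-τ)^(N-1) := by
  obtain ⟨h0, h1⟩ := hτ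
  set n := N - 1 with hn
  have hn1 : 1 ≤ n := by omega
  set s : ℝ := 1 - τ with hs
  have hs0 : 0 ≤ s := by simp [hs]; linarith
  have hs1 : s ≤ 1 := by simp [hs]; linarith
  have hg : (1 - s) * ∑ k ∈ Finset.range n, s^k = 1 - s^n := by
    have := geom_sum_mul s n
    linarith [this]
  have hlow : (n:ℝ) * s^(n-1) ≤ ∑ k ∈ Finset.range n, s^k := by
    have := Finset.card_nsmul_le_sum (Finset.range n) (fun k => s^k) (s^(n-1))
      (fun k hk => pow_le_pow_of_le_one hs0 hs1 (by simp at hk; omega))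
    simpa [nsmul_eq_mul] using this
  have hτs : τ = 1 - s := by simp [hs]
  calc τ * ((n:ℝ) * s^(n-1)) ≤ τ * ∑ k ∈ Finset.range n, s^k :=
        mul_le_mul_of_nonneg_left hlow h0
    _ = 1 - s^n := by rw [hτs]; exact hg

lemma phiI_strictMono (m N i : ℕ) (hN : 2 ≤ N) (him : i ≤ m) :
    StrictMonoOn (fun τ : ℝ => τ * alphaB m i (1 - (1-τ)^(N-1))) (Set.Ico 0 1) := by
  apply strictMonoOn_of_deriv_pos (convex_Ico 0 1)
  · exact (continuous_id.mul ((continuous_alphaB m i).comp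
      (by continuity : Continuous (fun τ : ℝ => 1 - (1-τ)^(N-1))))).continuousOn
  · intro x hx
    rw [interior_Ico] at hx
    obtain ⟨hx0, hx1⟩ := hx
    set c : ℝ := 1 - (1-x)^(N-1) with hcdef
    have hcI : c ∈ Set.Icc (0:ℝ) 1 := cfun_mem ⟨hx0.le, hx1.le⟩
    have hclt : c < 1 := cfun_lt_one hx1
    obtain ⟨d, hd, hb⟩ := alphaB_hasDeriv m i him c hcI
    have hcd := cfun_hasDeriv N x
    have hcomp : HasDerivAt (fun τ : ℝ => alphaB m i (1 - (1-τ)^(N-1)))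
        (d * (((N-1:ℕ):ℝ) * (1-x)^(N-1-1))) x := by
        have := hd.comp x hcd
        exact this
    have hprod : HasDerivAt (fun τ : ℝ => τ * alphaB m i (1 - (1-τ)^(N-1)))
        (1 * alphaB m i c + x * (d * (((N-1:ℕ):ℝ) * (1-x)^(N-1-1)))) x :=
      (hasDerivAt_id x).mul hcomp
    rw [hprod.deriv]
    set cp : ℝ := ((N-1:ℕ):ℝ) * (1-x)^(N-1-1) with hcp
    have hcp0 : 0 ≤ cp := by
      apply mul_nonneg (Nat.cast_nonneg _) (pow_nonneg (by linarith) _)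
    have hxc : x * cp ≤ c := tau_mul_deriv_le hN ⟨hx0.le, hx1.le⟩
    have hα := alphaB_ge hcI i him
    rcases le_or_gt 0 d with hd0 | hd0
    · nlinarith [pow_pos (by norm_num : (0:ℝ) < 2) i, mul_nonneg hx0.le (mul_nonneg hd0 hcp0)]
    · have h1 : d * (x * cp) ≥ d * c := by
        apply mul_le_mul_of_nonpos_left hxc hd0.le
      nlinarith [pow_pos (by norm_num : (0:ℝ) < 2) i, hb, hclt]

end BEBaux


namespace BEBaux

noncomputable def Dfun (m j : ℕ) (p c : ℝ) : ℝ :=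
  p * alphaB m j c + ((1 - p) / ((m : ℝ) - (j : ℝ))) * ∑ i ∈ Finset.Icc (j + 1) m, alphaB m i c

lemma Dfun_ge_one {m j : ℕ} (hj : j < m) {p c : ℝ} (hp : p ∈ Set.Icc (0:ℝ) 1)
    (hc : c ∈ Set.Icc (0:ℝ) 1) : 1 ≤ Dfun m j p c := by
  obtain ⟨hp0, hp1⟩ := hp
  have hK : (0:ℝ) < (m : ℝ) - (j : ℝ) := by
    have : (j:ℝ) < (m:ℝ) := by exact_mod_cast hj
    linarith
  have hKeq : ((m : ℝ) - (j : ℝ)) = ((m - j : ℕ) : ℝ) := by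
    have : j ≤ m := hj.le
    push_cast [Nat.cast_sub this]
    ring
  have hcard : (Finset.Icc (j+1) m).card = m - j := by
    rw [Nat.card_Icc]; omega
  have hsum : ((m : ℝ) - (j : ℝ)) * 1 ≤ ∑ i ∈ Finset.Icc (j+1) m, alphaB m i c := by
    have := Finset.card_nsmul_le_sum (Finset.Icc (j+1) m) (fun i => alphaB m i c) 1
      (fun i hi => by
        simp only [Finset.mem_Icc] at hi
        have h1 : (1:ℝ) ≤ 2^i := one_le_pow₀ (by norm_num)
        linarith [alphaB_ge hc i hi.2])
    rw [hcard] at this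
    rw [hKeq]
    simpa [nsmul_eq_mul] using this
  have hαj : (1:ℝ) ≤ alphaB m j c := by
    have h1 : (1:ℝ) ≤ 2^j := one_le_pow₀ (by norm_num)
    linarith [alphaB_ge hc j hj.le]
  have hterm : (1 - p) ≤ ((1 - p) / ((m : ℝ) - (j : ℝ))) * ∑ i ∈ Finset.Icc (j+1) m, alphaB m i c := by
    have hr : 0 ≤ (1 - p) / ((m : ℝ) - (j : ℝ)) := div_nonneg (by linarith) hK.le
    calc (1 - p) = ((1 - p) / ((m : ℝ) - (j : ℝ))) * (((m : ℝ) - (j : ℝ)) * 1) := by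
          field_simp
      _ ≤ _ := mul_le_mul_of_nonneg_left hsum hr
  unfold Dfun
  nlinarith [mul_le_mul_of_nonneg_left hαj hp0]

lemma Dfun_at_one {m j : ℕ} (hj : j < m) (p : ℝ) : Dfun m j p 1 = 2 ^ m := by
  have hK : (0:ℝ) < (m : ℝ) - (j : ℝ) := by
    have : (j:ℝ) < (m:ℝ) := by exact_mod_cast hj
    linarith
  have hcard : (Finset.Icc (j+1) m).card = m - j := by rw [Nat.card_Icc]; omega
  have hKeq : ((m : ℝ) - (j : ℝ)) = ((m - j : ℕ) : ℝ) := by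
    push_cast [Nat.cast_sub hj.le]; ring
  unfold Dfun
  rw [Finset.sum_congr rfl (fun i _ => alphaB_one m i), Finset.sum_const, hcard,
    nsmul_eq_mul, alphaB_one m j]
  rw [hKeq]
  have hne : ((m - j : ℕ) : ℝ) ≠ 0 := by rw [← hKeq]; exact hK.ne'
  field_simp
  ring

lemma Dfun_strict_anti {m j : ℕ} (hj : j < m) {p p' c : ℝ} (hpp : p < p')
    (hc : c ∈ Set.Ico (0:ℝ) 1) : Dfun m j p' c < Dfun m j p c := by
  have hK : (0:ℝ) < (m : ℝ) - (j : ℝ) := by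
    have : (j:ℝ) < (m:ℝ) := by exact_mod_cast hj
    linarith
  have hcard : (Finset.Icc (j+1) m).card = m - j := by rw [Nat.card_Icc]; omega
  have hne : (Finset.Icc (j+1) m).Nonempty := by
    rw [← Finset.card_pos, hcard]; omega
  set A := alphaB m j c with hA
  set S := ∑ i ∈ Finset.Icc (j+1) m, alphaB m i c with hS
  have hKA : ((m : ℝ) - (j : ℝ)) * A < S := by
    have hconst : ∑ _i ∈ Finset.Icc (j+1) m, A < S := by
      apply Finset.sum_lt_sum_of_nonempty hne
      intro i hi
      simp only [Finset.mem_Icc] at hi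
      exact alphaB_lt hc (by omega) hi.2
    rw [Finset.sum_const, hcard, nsmul_eq_mul] at hconst
    have hKeq : ((m : ℝ) - (j : ℝ)) = ((m - j : ℕ) : ℝ) := by
      push_cast [Nat.cast_sub hj.le]; ring
    rw [hKeq]; exact hconst
  have hAS : A < S / ((m : ℝ) - (j : ℝ)) := (lt_div_iff₀ hK).mpr (by linarith)
  have e : ∀ q : ℝ, q * A + ((1 - q) / ((m : ℝ) - (j : ℝ))) * S
      = S / ((m : ℝ) - (j : ℝ)) + q * (A - S / ((m : ℝ) - (j : ℝ))) := by
    intro q; field_simp; ring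
  show p' * A + ((1 - p') / ((m : ℝ) - (j : ℝ))) * S < p * A + ((1 - p) / ((m : ℝ) - (j : ℝ))) * S
  rw [e p, e p']
  have := mul_lt_mul_of_neg_right hpp (by linarith : A - S / ((m : ℝ) - (j : ℝ)) < 0)
  linarith

lemma Phi_strictMono (m N j : ℕ) (hN : 2 ≤ N) (hj : j < m) {p : ℝ} (hp : p ∈ Set.Icc (0:ℝ) 1) :
    StrictMonoOn (fun τ : ℝ => τ * Dfun m j p (1 - (1-τ)^(N-1))) (Set.Ico 0 1) := by
  have hK : (0:ℝ) < (m : ℝ) - (j : ℝ) := by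
    have : (j:ℝ) < (m:ℝ) := by exact_mod_cast hj
    linarith
  have hne : (Finset.Icc (j+1) m).Nonempty := by
    rw [← Finset.card_pos, Nat.card_Icc]; omega
  have hrew : ∀ τ : ℝ, τ * Dfun m j p (1 - (1-τ)^(N-1))
      = p * (τ * alphaB m j (1 - (1-τ)^(N-1)))
        + ((1 - p) / ((m : ℝ) - (j : ℝ)))
          * ∑ i ∈ Finset.Icc (j+1) m, τ * alphaB m i (1 - (1-τ)^(N-1)) := by
    intro τ
    unfold Dfun
    rw [← Finset.mul_sum]
    ring
  intro a ha b hb hab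
  simp only [hrew]
  have hjlt : a * alphaB m j (1 - (1-a)^(N-1)) < b * alphaB m j (1 - (1-b)^(N-1)) :=
    phiI_strictMono m N j hN hj.le ha hb hab
  have hsumlt : ∑ i ∈ Finset.Icc (j+1) m, a * alphaB m i (1 - (1-a)^(N-1))
      < ∑ i ∈ Finset.Icc (j+1) m, b * alphaB m i (1 - (1-b)^(N-1)) := by
    apply Finset.sum_lt_sum_of_nonempty hne
    intro i hi
    simp only [Finset.mem_Icc] at hi
    exact phiI_strictMono m N i hN hi.2 ha hb hab
  rcases hp.1.eq_or_lt with hp0 | hp0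
  · rw [← hp0]
    simp only [zero_mul, sub_zero, zero_add]
    have hr : (0:ℝ) < 1 / ((m : ℝ) - (j : ℝ)) := by positivity
    exact mul_lt_mul_of_pos_left hsumlt hr
  · have hr : (0:ℝ) ≤ (1 - p) / ((m : ℝ) - (j : ℝ)) := div_nonneg (by linarith [hp.2]) hK.le
    exact add_lt_add_of_lt_of_le (mul_lt_mul_of_pos_left hjlt hp0)
      (mul_le_mul_of_nonneg_left hsumlt.le hr)

end BEBaux

namespace BEBaux

lemma kappa_pos {CWmin : ℕ} (hCW : 2 ≤ CWmin) : 0 < kappa0 CWmin := by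
  unfold kappa0
  have : (0:ℝ) < CWmin := by exact_mod_cast (by omega : 0 < CWmin)
  positivity

lemma kappa_le_one {CWmin : ℕ} (hCW : 2 ≤ CWmin) : kappa0 CWmin ≤ 1 := by
  unfold kappa0
  rw [div_le_one (by exact_mod_cast (by omega : 0 < CWmin))]
  exact_mod_cast hCW

lemma fp_facts {m CWmin N j : ℕ} (hm : 1 ≤ m) (hCW : 2 ≤ CWmin) (hN : 2 ≤ N) (hj : j < m)
    {p τ : ℝ} (hp : p ∈ Set.Icc (0:ℝ) 1) (hfp : IsFixedPointRR m CWmin N j p τ) :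
    0 < τ ∧ τ < 1 ∧ τ * Dfun m j p (1 - (1-τ)^(N-1)) = kappa0 CWmin := by
  obtain ⟨hmem, heq⟩ := hfp
  have hceq : tauRRC m CWmin j p (1 - (1-τ)^(N-1))
      = kappa0 CWmin / Dfun m j p (1 - (1-τ)^(N-1)) := rfl
  rw [hceq] at heq
  have hcI := cfun_mem (N := N) hmem
  have hD := Dfun_ge_one hj hp hcI
  have hκ := kappa_pos hCW
  have hτpos : 0 < τ := by rw [heq]; exact div_pos hκ (by linarith)
  have hτlt : τ < 1 := by
    by_contra h
    have hτ1 : τ = 1 := le_antisymm hmem.2 (not_lt.1 h)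
    have hc1 : (1:ℝ) - (1-(1:ℝ))^(N-1) = 1 := by
      rw [sub_self, zero_pow (by omega : N-1 ≠ 0), sub_zero]
    rw [hτ1, hc1, Dfun_at_one hj] at heq
    have h2m : (2:ℝ) ≤ 2^m := by
      calc (2:ℝ) = 2^1 := (pow_one 2).symm
        _ ≤ 2^m := pow_le_pow_right₀ (by norm_num) hm
    have hκ1 := kappa_le_one hCW
    have hlt : kappa0 CWmin / 2^m < 1 := (div_lt_one (by positivity)).2 (by linarith)
    linarith [heq.symm]
  refine ⟨hτpos, hτlt, ?_⟩
  nth_rewrite 1 [heq]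
  exact div_mul_cancel₀ _ (by linarith : Dfun m j p (1 - (1-τ)^(N-1)) ≠ 0)

end BEBaux

open BEBaux in
/-- For fixed `j ∈ {0,…,m-1}` and `N ≥ 2`, the fixed-point attempt probability
`p₀ ↦ τ(j;p₀)` (given here as a function `T` satisfying the fixed-point equation) is
continuous and strictly increasing on `[0,1]`. -/
theorem fixedPointRR_continuous_strictMono (m CWmin N : ℕ) (hm : 1 ≤ m) (hCW : 2 ≤ CWmin)
    (hN : 2 ≤ N) (j : ℕ) (hj : j < m) (T : ℝ → ℝ)
    (hT : ∀ p0 ∈ Set.Icc (0 : ℝ) 1, IsFixedPointRR m CWmin N j p0 (T p0)) :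
    ContinuousOn T (Set.Icc 0 1) ∧ StrictMonoOn T (Set.Icc 0 1) := by
  have h0mem : (0:ℝ) ∈ Set.Icc (0:ℝ) 1 := by norm_num
  have h1mem : (1:ℝ) ∈ Set.Icc (0:ℝ) 1 := by norm_num
  have hmono : StrictMonoOn T (Set.Icc 0 1) := by
    intro p hp p' hp' hlt
    obtain ⟨hτ0, hτ1, hτeq⟩ := fp_facts hm hCW hN hj hp (hT p hp)
    obtain ⟨hτ'0, hτ'1, hτ'eq⟩ := fp_facts hm hCW hN hj hp' (hT p' hp')
    have hmemT : T p ∈ Set.Ico (0:ℝ) 1 := ⟨hτ0.le, hτ1⟩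
    have hmemT' : T p' ∈ Set.Ico (0:ℝ) 1 := ⟨hτ'0.le, hτ'1⟩
    have hc'mem : 1 - (1 - T p')^(N-1) ∈ Set.Ico (0:ℝ) 1 :=
      ⟨(cfun_mem ⟨hτ'0.le, hτ'1.le⟩).1, cfun_lt_one hτ'1⟩
    have hDlt : Dfun m j p' (1 - (1 - T p')^(N-1)) < Dfun m j p (1 - (1 - T p')^(N-1)) :=
      Dfun_strict_anti hj hlt hc'mem
    have hkey : T p * Dfun m j p (1 - (1 - T p)^(N-1))
        < T p' * Dfun m j p (1 - (1 - T p')^(N-1)) := by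
      rw [hτeq, ← hτ'eq]
      exact mul_lt_mul_of_pos_left hDlt hτ'0
    by_contra h
    push_neg at h
    have h2 := (Phi_strictMono m N j hN hj hp).monotoneOn hmemT' hmemT h
    linarith
  have hsurj : ∀ y ∈ Set.Icc (T 0) (T 1), ∃ p ∈ Set.Icc (0:ℝ) 1, T p = y := by
    intro y hy
    obtain ⟨hτ00, hτ01, hτ0eq⟩ := fp_facts hm hCW hN hj h0mem (hT 0 h0mem)
    obtain ⟨hτ10, hτ11, hτ1eq⟩ := fp_facts hm hCW hN hj h1mem (hT 1 h1mem)
    have hy0 : 0 < y := lt_of_lt_of_le hτ00 hy.1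
    have hy1 : y < 1 := lt_of_le_of_lt hy.2 hτ11
    have hcyI : 1 - (1 - y)^(N-1) ∈ Set.Icc (0:ℝ) 1 := cfun_mem ⟨hy0.le, hy1.le⟩
    have hLcont : ContinuousOn (fun p : ℝ => y * Dfun m j p (1 - (1 - y)^(N-1)))
        (Set.Icc 0 1) := by
      apply Continuous.continuousOn
      unfold Dfun
      fun_prop
    have hL0 : kappa0 CWmin ≤ y * Dfun m j 0 (1 - (1 - y)^(N-1)) := by
      have h2 := (Phi_strictMono m N j hN hj h0mem).monotoneOn ⟨hτ00.le, hτ01⟩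
        ⟨hy0.le, hy1⟩ hy.1
      linarith [hτ0eq]
    have hL1 : y * Dfun m j 1 (1 - (1 - y)^(N-1)) ≤ kappa0 CWmin := by
      have h2 := (Phi_strictMono m N j hN hj h1mem).monotoneOn ⟨hy0.le, hy1⟩
        ⟨hτ10.le, hτ11⟩ hy.2
      linarith [hτ1eq]
    obtain ⟨p, hpmem, hLp⟩ := intermediate_value_Icc' (by norm_num : (0:ℝ) ≤ 1) hLcont
      ⟨hL1, hL0⟩
    simp only at hLp
    obtain ⟨hτp0, hτp1, hτpeq⟩ := fp_facts hm hCW hN hj hpmem (hT p hpmem)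
    refine ⟨p, hpmem, ?_⟩
    apply (Phi_strictMono m N j hN hj hpmem).injOn ⟨hτp0.le, hτp1⟩ ⟨hy0.le, hy1⟩
    show T p * Dfun m j p (1 - (1 - T p)^(N-1)) = y * Dfun m j p (1 - (1 - y)^(N-1))
    rw [hτpeq, hLp]
  have hcont : ContinuousOn T (Set.Icc 0 1) := by
    intro a ha
    have hR : a < 1 → ContinuousWithinAt T (Set.Ici a) a := by
      intro ha1
      apply StrictMonoOn.continuousWithinAt_right_of_exists_between hmono
      · exact mem_nhdsWithin.2 ⟨Set.Iio 1, isOpen_Iio, ha1,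
          fun x hx => ⟨le_trans ha.1 hx.2, le_of_lt hx.1⟩⟩
      · intro b hb
        rcases le_or_gt (T 1) b with hb1 | hb1
        · exact ⟨1, h1mem, hmono ha h1mem ha1, hb1⟩
        · have hb0 : T 0 ≤ b := by
            have hmt : T 0 ≤ T a := hmono.monotoneOn h0mem ha ha.1
            linarith
          obtain ⟨p, hp, hTp⟩ := hsurj b ⟨hb0, hb1.le⟩
          exact ⟨p, hp, by rw [hTp]; exact ⟨hb, le_refl b⟩⟩
    have hLc : 0 < a → ContinuousWithinAt T (Set.Iic a) a := by
      intro ha0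
      apply StrictMonoOn.continuousWithinAt_left_of_exists_between hmono
      · exact mem_nhdsWithin.2 ⟨Set.Ioi 0, isOpen_Ioi, ha0,
          fun x hx => ⟨le_of_lt hx.1, le_trans hx.2 ha.2⟩⟩
      · intro b hb
        rcases le_or_gt b (T 0) with hb0 | hb0
        · exact ⟨0, h0mem, hb0, hmono h0mem ha ha0⟩
        · have hb1 : b ≤ T 1 := by
            have hmt : T a ≤ T 1 := hmono.monotoneOn ha h1mem ha.2
            linarith
          obtain ⟨p, hp, hTp⟩ := hsurj b ⟨hb0.le, hb1⟩
          exact ⟨p, hp, by rw [hTp]; exact ⟨le_refl b, hb⟩⟩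
    by_cases h1 : a < 1
    · by_cases h0 : 0 < a
      · exact ((hLc h0).union (hR h1)).mono
          (fun x _ => (le_total x a).elim Or.inl Or.inr)
      · have ha0 : a = 0 := le_antisymm (not_lt.1 h0) ha.1
        exact (hR h1).mono (fun x hx => by rw [ha0]; exact hx.1)
    · have ha1 : a = 1 := le_antisymm ha.2 (not_lt.1 h1)
      exact (hLc (by rw [ha1]; norm_num)).mono (fun x hx => by rw [ha1]; exact hx.2)
  exact ⟨hcont, hmono⟩
end
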